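/- arXiv:2410.01760 — 3 statements merged into one kernel-verified Lean document; each statement's English description precedes it below -/
import Mathlib

section
/- Let Q be any feasible eviction strategy and let H_Q be any eviction graph of a run of Q. Then H_Q is an oriented forest: it contains no directed cycles and every vertex has in-degree at most one. -/
namespace Caching

attribute [local instance low] Classical.propDecidable

/-- A run of a feasible eviction strategy on the request sequence `σ` with cache size `k`
and time horizon `T`.  `C t` is the cache after processing request `t` (with `C 0 = ∅`),
and `p t` is the page evicted at time `t` (meaningful at full-cache misses). -/
structure CacheRun (S : Type) [DecidableEq S] (k T : ℕ) (σ : ℕ → S) where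
  C : ℕ → Finset S
  p : ℕ → S
  init : C 0 = ∅
  card_le : ∀ t, (C t).card ≤ k
  hit : ∀ t, 1 ≤ t → t ≤ T → (σ t ∈ C (t - 1) ∨ (C (t - 1)).card < k) →
      C t = insert (σ t) (C (t - 1))
  evict_mem : ∀ t, 1 ≤ t → t ≤ T → σ t ∉ C (t - 1) → (C (t - 1)).card = k →
      p t ∈ C (t - 1)
  evict : ∀ t, 1 ≤ t → t ≤ T → σ t ∉ C (t - 1) → (C (t - 1)).card = k →
      C t = insert (σ t) ((C (t - 1)).erase (p t))

variable {S : Type} [DecidableEq S]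

/- `nextReq σ T t` is `ν(t)`: the first time `s > t` (with `s ≤ T`) at which the page
`σ t` is requested again, and `T + 1` if there is no such time. -/
open Classical in
noncomputable def nextReq (σ : ℕ → S) (T t : ℕ) : ℕ :=
  if h : ∃ s, t < s ∧ s ≤ T ∧ σ s = σ t then Nat.find h else T + 1

/-- The total prediction loss `η = Σ_{t=1}^T |ν(t) - ω(t)|`. -/
noncomputable def totalLoss (σ : ℕ → S) (T : ℕ) (ω : ℕ → ℕ) : ℕ :=
  ∑ t ∈ Finset.Icc 1 T, Nat.dist (nextReq σ T t) (ω t)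

/-- `I_Q(t)`: indices of the last requests (up to time `t`) of the currently cached pages. -/
noncomputable def lastIdx {k T : ℕ} {σ : ℕ → S} (R : CacheRun S k T σ) (t : ℕ) : Finset ℕ :=
  (Finset.Icc 1 t).filter fun i => σ i ∈ R.C t ∧ ∀ j ∈ Finset.Icc (i + 1) t, σ j ≠ σ i

/-- Time `t` is a full-cache miss (an eviction step). -/
def EvictStep {k T : ℕ} {σ : ℕ → S} (R : CacheRun S k T σ) (t : ℕ) : Prop :=
  1 ≤ t ∧ t ≤ T ∧ σ t ∉ R.C (t - 1) ∧ (R.C (t - 1)).card = k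

/-- At time `t` the run evicts the page whose last-request index is `i`. -/
def EvictsIdx {k T : ℕ} {σ : ℕ → S} (R : CacheRun S k T σ) (t i : ℕ) : Prop :=
  EvictStep R t ∧ i ∈ lastIdx R (t - 1) ∧ R.p t = σ i

/-- `OBJ_Q`: the number of cache misses of the run. -/
noncomputable def misses {k T : ℕ} {σ : ℕ → S} (R : CacheRun S k T σ) : ℕ :=
  ((Finset.Icc 1 T).filter fun t => σ t ∉ R.C (t - 1)).card

/-- Belady's algorithm: on a full-cache miss always evict the cached page with the
largest next-request time. -/
def IsBelady {k T : ℕ} {σ : ℕ → S} (A : CacheRun S k T σ) : Prop :=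
  ∀ t, EvictStep A t → ∀ i ∈ lastIdx A (t - 1), A.p t = σ i →
    ∀ j ∈ lastIdx A (t - 1), nextReq σ T j ≤ nextReq σ T i

/-- BlindOracle: on a full-cache miss always evict the cached page with the largest
predicted next-request time. -/
def IsBlindOracle {k T : ℕ} {σ : ℕ → S} (B : CacheRun S k T σ) (ω : ℕ → ℕ) : Prop :=
  ∀ t, EvictStep B t → ∀ i ∈ lastIdx B (t - 1), B.p t = σ i →
    ∀ j ∈ lastIdx B (t - 1), ω j ≤ ω i

/-- An eviction graph of a run: a directed graph on `{1,…,T}` whose every edge `(i, j)`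
corresponds to a distinct time (`time e`) at which the run made a mistake by evicting
page `σ j` while `i` was a strictly better eviction candidate in the cache. -/
structure EvictionGraph {k T : ℕ} {σ : ℕ → S} (R : CacheRun S k T σ) where
  E : Finset (ℕ × ℕ)
  time : ℕ × ℕ → ℕ
  time_inj : ∀ e ∈ E, ∀ e' ∈ E, time e = time e' → e = e'
  mistake : ∀ e ∈ E, EvictsIdx R (time e) e.2 ∧ e.1 ∈ lastIdx R (time e - 1) ∧
      nextReq σ T e.2 < nextReq σ T e.1

/-- The eviction at time `t` triggers the eviction at time `t'`: the page evicted
at `t` is next requested at `t' = ν(i)`, which is again an eviction step. -/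
def Triggers {k T : ℕ} {σ : ℕ → S} (R : CacheRun S k T σ) (t t' : ℕ) : Prop :=
  ∃ i, EvictsIdx R t i ∧ t' = nextReq σ T i ∧ ∃ j, EvictsIdx R t' j

/-- The eviction of the page with last-request index `i` triggers the eviction of the
page with last-request index `j` (at time `ν(i)`). -/
def TriggersIdx {k T : ℕ} {σ : ℕ → S} (R : CacheRun S k T σ) (i j : ℕ) : Prop :=
  (∃ t, EvictsIdx R t i) ∧ EvictsIdx R (nextReq σ T i) j

/-- The page requested at time `t` was never requested before. -/
def NewPage (σ : ℕ → S) (t : ℕ) : Prop := ∀ s, 1 ≤ s → s < t → σ s ≠ σ t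

/-- At time `t` the evicted page has the largest prediction among cached pages. -/
def BlindChoiceAt {k T : ℕ} {σ : ℕ → S} (R : CacheRun S k T σ) (ω : ℕ → ℕ) (t : ℕ) : Prop :=
  ∀ i ∈ lastIdx R (t - 1), R.p t = σ i → ∀ j ∈ lastIdx R (t - 1), ω j ≤ ω i

/-- Corrector's choice at time `t`: if some cached page has a provably wrong prediction
(`ω i < t`), evict such a page with minimal prediction; otherwise act as BlindOracle. -/
def CorrectorChoiceAt {k T : ℕ} {σ : ℕ → S} (R : CacheRun S k T σ) (ω : ℕ → ℕ) (t : ℕ) :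
    Prop :=
  ((∃ i ∈ lastIdx R (t - 1), ω i < t) →
    ∀ i ∈ lastIdx R (t - 1), R.p t = σ i →
      ω i < t ∧ ∀ j ∈ lastIdx R (t - 1), ω j < t → ω i ≤ ω j) ∧
  ((¬ ∃ i ∈ lastIdx R (t - 1), ω i < t) → BlindChoiceAt R ω t)

/-- The page requested at time `t` was last evicted (before `t`) at a step labeled with
strategy `s₀` (0 = BlindOracle, 1 = RandomAlg, 2 = Corrector). -/
def LastEvictedWith {k T : ℕ} {σ : ℕ → S} (R : CacheRun S k T σ) (strat : ℕ → Fin 3)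
    (t : ℕ) (s₀ : Fin 3) : Prop :=
  ∃ t₀, t₀ < t ∧ EvictStep R t₀ ∧ R.p t₀ = σ t ∧ strat t₀ = s₀ ∧
    ∀ t₁, t₀ < t₁ → t₁ < t → ¬(EvictStep R t₁ ∧ R.p t₁ = σ t)

/-- A run of the AlternatingOracle strategy (for a fixed realization of its random
choices), together with the labeling `strat` of which of the three strategies was used
at each eviction step: on a miss for a never-requested page use BlindOracle; if the
requested page was last evicted by BlindOracle use RandomAlg (an arbitrary cached page);
if by RandomAlg use Corrector; if by Corrector use BlindOracle. -/
def IsAlternatingOracle {k T : ℕ} {σ : ℕ → S} (R : CacheRun S k T σ) (ω : ℕ → ℕ)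
    (strat : ℕ → Fin 3) : Prop :=
  ∀ t, EvictStep R t →
    (NewPage σ t → strat t = 0 ∧ BlindChoiceAt R ω t) ∧
    (LastEvictedWith R strat t 0 → strat t = 1) ∧
    (LastEvictedWith R strat t 1 → strat t = 2 ∧ CorrectorChoiceAt R ω t) ∧
    (LastEvictedWith R strat t 2 → strat t = 0 ∧ BlindChoiceAt R ω t)

/-- AlternatingOracle driven by a seed `u` of uniform random values: at each eviction
step performed by RandomAlg at time `t`, the evicted page is the one whose last-request
index has rank `u t` among the `k` cached indices, so that for a uniformly random seed
the evicted page is uniform over the cache. -/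
def IsAlternatingOracleSeeded {k T : ℕ} {σ : ℕ → S} (R : CacheRun S k T σ) (ω : ℕ → ℕ)
    (strat : ℕ → Fin 3) (u : Fin (T + 1) → Fin k) : Prop :=
  IsAlternatingOracle R ω strat ∧
  ∀ t (h : EvictStep R t), strat t = 1 →
    ∀ i ∈ lastIdx R (t - 1), R.p t = σ i →
      ((lastIdx R (t - 1)).filter fun j => j < i).card =
        ((u ⟨t, Nat.lt_succ_of_le h.2.1⟩ : Fin k) : ℕ)

/-- The family of runs is adapted to the seeds: the behavior up to time `t` depends only
on the seed values with index at most `t` (the strategy is online). -/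
def Adapted {k T : ℕ} {σ : ℕ → S} (R : (Fin (T + 1) → Fin k) → CacheRun S k T σ)
    (strat : (Fin (T + 1) → Fin k) → ℕ → Fin 3) : Prop :=
  ∀ u u' t, (∀ s : Fin (T + 1), (s : ℕ) ≤ t → u s = u' s) →
    (R u).C t = (R u').C t ∧ (R u).p t = (R u').p t ∧ strat u t = strat u' t

/-- The probability of the outcome `x` for `T` i.i.d. Bernoulli(γ) random bits. -/
noncomputable def bernWeight (γ : ℝ) {T : ℕ} (x : Fin T → Bool) : ℝ :=
  ∏ i, if x i then γ else 1 - γ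

/-- `S(x, m)`: the number of ones among the first `m` coordinates of `x`. -/
noncomputable def scount {T : ℕ} (x : Fin T → Bool) (m : ℕ) : ℕ :=
  (Finset.univ.filter fun i : Fin T => (i : ℕ) < m ∧ x i).card


private lemma mem_prev {S : Type} [DecidableEq S] {k T : ℕ} {σ : ℕ → S}
    (R : CacheRun S k T σ) {s : ℕ} (h1 : 1 ≤ s) (h2 : s ≤ T) {x : S}
    (hx : x ∈ R.C s) (hne : x ≠ σ s) : x ∈ R.C (s - 1) := by
  by_cases hc : σ s ∈ R.C (s - 1) ∨ (R.C (s - 1)).card < k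
  · rw [R.hit s h1 h2 hc] at hx
    rcases Finset.mem_insert.1 hx with h | h
    · exact absurd h hne
    · exact h
  · push_neg at hc
    have hcard : (R.C (s - 1)).card = k := le_antisymm (R.card_le _) hc.2
    rw [R.evict s h1 h2 hc.1 hcard] at hx
    rcases Finset.mem_insert.1 hx with h | h
    · exact absurd h hne
    · exact Finset.mem_of_mem_erase h

private lemma mem_back {S : Type} [DecidableEq S] {k T : ℕ} {σ : ℕ → S}
    (R : CacheRun S k T σ) {a b : ℕ} (hab : a ≤ b) (hbT : b ≤ T) {x : S}
    (hno : ∀ s, a < s → s ≤ b → σ s ≠ x) (hx : x ∈ R.C b) : x ∈ R.C a := by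
  induction b, hab using Nat.le_induction with
  | base => exact hx
  | succ b hb ih =>
    have h1 : 1 ≤ b + 1 := Nat.succ_le_succ (Nat.zero_le _)
    have hne : x ≠ σ (b + 1) := fun h => hno (b + 1) (Nat.lt_succ_of_le hb) le_rfl h.symm
    have := mem_prev R h1 hbT hx hne
    simp only [Nat.add_sub_cancel] at this
    exact ih (le_of_lt (Nat.lt_of_succ_le hbT)) (fun s hs1 hs2 => hno s hs1 (le_trans hs2 (Nat.le_succ b))) this

/-- The page evicted at time `t` with last index `j` cannot be in the cache again
at a later time `t' - 1` with `j` still its last index. -/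
private lemma unique_evict_time {S : Type} [DecidableEq S] {k T : ℕ} {σ : ℕ → S}
    (R : CacheRun S k T σ) {t t' j : ℕ} (h : EvictsIdx R t j) (h' : EvictsIdx R t' j)
    (htt : t < t') : False := by
  obtain ⟨⟨ht1, htT, hmiss, hcard⟩, hj, hp⟩ := h
  obtain ⟨⟨ht1', htT', _, _⟩, hj', _⟩ := h'
  simp only [lastIdx, Finset.mem_filter, Finset.mem_Icc] at hj hj'
  obtain ⟨⟨hj1, hjt⟩, hjmem, _⟩ := hj
  obtain ⟨⟨_, _⟩, hjmem', hjno'⟩ := hj'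
  -- σ j ∉ R.C t
  have hne : σ j ≠ σ t := fun hh => hmiss (hh ▸ hjmem)
  have hnot : σ j ∉ R.C t := by
    rw [R.evict t ht1 htT hmiss hcard, hp]
    simp [hne]
  -- but σ j ∈ R.C (t' - 1) and no request of σ j in (t, t'-1], so σ j ∈ R.C t
  have htle : t ≤ t' - 1 := Nat.le_sub_one_of_lt htt
  have hbT : t' - 1 ≤ T := le_trans (Nat.sub_le _ _) htT'
  refine hnot (mem_back R htle hbT ?_ hjmem')
  intro s hs1 hs2 hss
  exact hjno' s ⟨Nat.succ_le_of_lt (lt_of_le_of_lt hjt (lt_of_le_of_lt (Nat.sub_le t 1) hs1)), hs2⟩ hss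

/-- Any eviction graph of a run of a feasible eviction strategy is an
oriented forest: it has no directed cycles and every vertex has in-degree at most one. -/
theorem stmt1 {S : Type} [DecidableEq S] (k T : ℕ) (hk : 1 ≤ k) (σ : ℕ → S)
    (R : CacheRun S k T σ) (H : EvictionGraph R) :
    (∀ (n : ℕ) (f : ℕ → ℕ), 0 < n → (∀ i < n, (f i, f (i + 1)) ∈ H.E) → f n ≠ f 0) ∧
    (∀ e ∈ H.E, ∀ e' ∈ H.E, e.2 = e'.2 → e = e') := by
  constructor
  · intro n f hn hE
    have key : ∀ m, 0 < m → m ≤ n → nextReq σ T (f m) < nextReq σ T (f 0) := by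
      intro m hm hmn
      induction m with
      | zero => omega
      | succ m ih =>
        have hedge := H.mistake _ (hE m (by omega))
        have hlt : nextReq σ T (f (m + 1)) < nextReq σ T (f m) := hedge.2.2
        rcases Nat.eq_zero_or_pos m with h0 | h0
        · rw [h0] at hlt; exact h0 ▸ hlt
        · exact lt_trans hlt (ih h0 (by omega))
    intro hfeq
    exact absurd (hfeq ▸ key n hn le_rfl) (lt_irrefl _)
  · intro e he e' he' h2
    obtain ⟨hm, _, _⟩ := H.mistake e he
    obtain ⟨hm', _, _⟩ := H.mistake e' he'
    rcases lt_trichotomy (H.time e) (H.time e') with h | h | h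
    · exact absurd (unique_evict_time R hm (h2 ▸ hm') h) id
    · exact H.time_inj e he e' he' h
    · exact absurd (unique_evict_time R (h2 ▸ hm') hm h) id


end Caching
end

section
/- For any feasible eviction strategy Q (and any run of Q), there exists an eviction graph H_Q of that run such that OBJ_Q ≤ OPT + |E|, where E is the set of edges of H_Q. -/
namespace Caching

attribute [local instance low] Classical.propDecidable

variable {S : Type} [DecidableEq S]

/-! ### Auxiliary development for Statement 3 -/

section Stmt3Aux

variable {k T : ℕ} {σ : ℕ → S}

/-- Last occurrence of page `x` among times `≤ s`. -/
noncomputable def liOf (σ : ℕ → S) (x : S) (s : ℕ) : ℕ :=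
  Nat.findGreatest (fun i => σ i = x) s

lemma liOf_le {x : S} {s : ℕ} : liOf σ x s ≤ s := Nat.findGreatest_le s

lemma liOf_ge {x : S} {i s : ℕ} (hi : i ≤ s) (hx : σ i = x) : i ≤ liOf σ x s :=
  Nat.le_findGreatest hi hx

lemma liOf_no_later {x : S} {s j : ℕ} (h1 : liOf σ x s < j) (h2 : j ≤ s) : σ j ≠ x :=
  Nat.findGreatest_is_greatest h1 h2

lemma liOf_spec {x : S} {i s : ℕ} (h1 : 1 ≤ i) (h2 : i ≤ s) (hx : σ i = x) :
    1 ≤ liOf σ x s ∧ σ (liOf σ x s) = x :=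
  ⟨le_trans h1 (liOf_ge h2 hx), Nat.findGreatest_spec (P := fun i => σ i = x) h2 hx⟩

lemma liOf_succ_ne {x : S} {s : ℕ} (h : σ (s+1) ≠ x) : liOf σ x (s+1) = liOf σ x s := by
  unfold liOf
  rw [Nat.findGreatest_succ]
  simp [h]

lemma liOf_eq_of {x : S} {i s : ℕ} (h1 : 1 ≤ i) (h2 : i ≤ s) (hx : σ i = x)
    (hno : ∀ j, i < j → j ≤ s → σ j ≠ x) : liOf σ x s = i := by
  have hge := liOf_ge (σ := σ) h2 hx
  rcases lt_or_eq_of_le hge with h | h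
  · exact absurd (liOf_spec h1 h2 hx).2 (hno _ h liOf_le)
  · exact h.symm

end Stmt3Aux
section Stmt3Aux2

variable {k T : ℕ} {σ : ℕ → S}

/-- Step trichotomy for a cache run. -/
lemma step_cases (Q : CacheRun S k T σ) {u : ℕ} (h1 : 1 ≤ u) (h2 : u ≤ T) :
    (Q.C u = insert (σ u) (Q.C (u-1)) ∧ (σ u ∈ Q.C (u-1) ∨ (Q.C (u-1)).card < k)) ∨
    (σ u ∉ Q.C (u-1) ∧ (Q.C (u-1)).card = k ∧ Q.p u ∈ Q.C (u-1) ∧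
      Q.C u = insert (σ u) ((Q.C (u-1)).erase (Q.p u))) := by
  by_cases h : σ u ∈ Q.C (u-1) ∨ (Q.C (u-1)).card < k
  · exact Or.inl ⟨Q.hit u h1 h2 h, h⟩
  · push_neg at h
    have hcard : (Q.C (u-1)).card = k := le_antisymm (Q.card_le _) h.2
    exact Or.inr ⟨h.1, hcard, Q.evict_mem u h1 h2 h.1 hcard, Q.evict u h1 h2 h.1 hcard⟩

lemma C_subset_insert (Q : CacheRun S k T σ) {u : ℕ} (h1 : 1 ≤ u) (h2 : u ≤ T) :
    Q.C u ⊆ insert (σ u) (Q.C (u-1)) := by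
  rcases step_cases Q h1 h2 with ⟨h, _⟩ | ⟨_, _, _, h⟩
  · rw [h]
  · rw [h]
    exact Finset.insert_subset_insert _ (Finset.erase_subset _ _)

/-- Every cached page has been requested at some time in `[1, s]`. -/
lemma mem_C_occ (Q : CacheRun S k T σ) {s : ℕ} (hs : s ≤ T) {x : S} (hx : x ∈ Q.C s) :
    ∃ i, 1 ≤ i ∧ i ≤ s ∧ σ i = x := by
  induction s with
  | zero => rw [Q.init] at hx; exact absurd hx (Finset.notMem_empty x)
  | succ s ih =>
    have hsub := C_subset_insert Q (Nat.succ_le_succ (Nat.zero_le s)) hs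
    replace hsub : Q.C (s+1) ⊆ insert (σ (s+1)) (Q.C s) := hsub
    rcases Finset.mem_insert.1 (hsub hx) with h | h
    · exact ⟨s+1, Nat.succ_le_succ (Nat.zero_le s), le_refl _, h.symm⟩
    · obtain ⟨i, hi1, hi2, hi3⟩ := ih (le_trans (Nat.le_succ s) hs) h
      exact ⟨i, hi1, le_trans hi2 (Nat.le_succ s), hi3⟩

lemma card_C_mono (Q : CacheRun S k T σ) {u : ℕ} (h1 : 1 ≤ u) (h2 : u ≤ T) :
    (Q.C (u-1)).card ≤ (Q.C u).card := by
  rcases step_cases Q h1 h2 with ⟨h, _⟩ | ⟨hσ, hcard, hp, h⟩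
  · rw [h]; exact Finset.card_le_card (Finset.subset_insert _ _) |>.trans (le_refl _) |>.trans
      (le_of_eq rfl) |>.trans (le_refl _)
  · rw [h, Finset.card_insert_of_notMem (fun hc => hσ (Finset.mem_of_mem_erase hc)),
      Finset.card_erase_of_mem hp]
    omega

lemma card_C_full (Q : CacheRun S k T σ) {t s : ℕ} (hts : t ≤ s) (hs : s ≤ T)
    (h : (Q.C t).card = k) : (Q.C s).card = k := by
  induction s with
  | zero => have : t = 0 := Nat.le_zero.mp hts; rwa [this] at h
  | succ s ih =>
    rcases Nat.lt_or_ge t (s+1) with hlt | hge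
    · have hk' := ih (by omega) (by omega)
      have hm := card_C_mono Q (u := s+1) (Nat.succ_le_succ (Nat.zero_le s)) hs
      simp only [Nat.add_sub_cancel] at hm
      have hle := Q.card_le (s+1)
      show (Q.C (s+1)).card = k
      omega
    · have : t = s + 1 := le_antisymm hts hge
      rwa [this] at h

/-- `ν` of a page, measured at time `s`: next request after its last occurrence `≤ s`. -/
noncomputable def nuOf (σ : ℕ → S) (T : ℕ) (x : S) (s : ℕ) : ℕ :=
  nextReq σ T (liOf σ x s)

lemma nextReq_spec {i : ℕ} (hi : i ≤ T) :
    (nextReq σ T i ≤ T ∧ i < nextReq σ T i ∧ σ (nextReq σ T i) = σ i ∧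
      ∀ j, i < j → j < nextReq σ T i → σ j ≠ σ i) ∨
    (nextReq σ T i = T + 1 ∧ ∀ j, i < j → j ≤ T → σ j ≠ σ i) := by
  unfold nextReq
  split
  · rename_i h
    have hspec := Nat.find_spec h
    exact Or.inl ⟨hspec.2.1, hspec.1, hspec.2.2, fun j hj1 hj2 hj3 =>
      Nat.find_min h hj2 ⟨hj1, le_trans (le_of_lt hj2) hspec.2.1, hj3⟩⟩
  · rename_i h
    push_neg at h
    exact Or.inr ⟨rfl, fun j hj1 hj2 => h j hj1 hj2⟩

/-- For a page occurring in `[1,s]`, its `ν` at time `s` exceeds `s` (`s ≤ T`). -/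
lemma nuOf_gt {x : S} {s : ℕ} (hs : s ≤ T) {i : ℕ} (h1 : 1 ≤ i) (h2 : i ≤ s)
    (hx : σ i = x) : s < nuOf σ T x s := by
  obtain ⟨hl1, hl2⟩ := liOf_spec h1 h2 hx
  have hliT : liOf σ x s ≤ T := le_trans (liOf_le (σ := σ) (x := x) (s := s)) hs
  show s < nextReq σ T (liOf σ x s)
  rcases nextReq_spec (σ := σ) hliT with ⟨hν1, hν2, hν3, hν4⟩ | ⟨hν1, _⟩
  · by_contra hc
    push_neg at hc
    exact liOf_no_later (σ := σ) (x := x) hν2 hc (hν3.trans hl2)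
  · omega

/-- `ν = s+1` iff the page is requested at `s+1` (page occurring in `[1,s]`, `s+1 ≤ T`). -/
lemma nuOf_eq_succ_iff {x : S} {s : ℕ} (hs : s + 1 ≤ T) {i : ℕ} (h1 : 1 ≤ i) (h2 : i ≤ s)
    (hx : σ i = x) : nuOf σ T x s = s + 1 ↔ σ (s+1) = x := by
  obtain ⟨hl1, hl2⟩ := liOf_spec h1 h2 hx
  have hli : liOf σ x s ≤ s := liOf_le
  have hgt : s < nuOf σ T x s := nuOf_gt (by omega) h1 h2 hx
  rw [nuOf] at hgt ⊢
  rcases nextReq_spec (σ := σ) (T := T) (i := liOf σ x s) (by omega) with ⟨hν1, hν2, hν3, hν4⟩ | ⟨hν1, hν2⟩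
  · constructor
    · intro h
      rw [h] at hν3; rw [hν3, hl2]
    · intro h
      by_contra hc
      have hlt : s + 1 < nextReq σ T (liOf σ x s) := by omega
      exact hν4 (s+1) (by omega) hlt (by rw [h, hl2])
  · constructor
    · intro h; omega
    · intro h
      exact absurd (by rw [h, hl2] : σ (s+1) = σ (liOf σ x s))
        (hν2 (s+1) (by omega) hs)

lemma nuOf_succ_ne {x : S} {s : ℕ} (h : σ (s+1) ≠ x) : nuOf σ T x (s+1) = nuOf σ T x s := by
  rw [nuOf, nuOf, liOf_succ_ne h]

end Stmt3Aux2
section Stmt3Aux3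

variable {k T : ℕ} {σ : ℕ → S}

lemma mem_lastIdx_iff {Q : CacheRun S k T σ} {s i : ℕ} :
    i ∈ lastIdx Q s ↔ (1 ≤ i ∧ i ≤ s ∧ σ i ∈ Q.C s ∧ ∀ j, i < j → j ≤ s → σ j ≠ σ i) := by
  unfold lastIdx
  simp only [Finset.mem_filter, Finset.mem_Icc]
  constructor
  · rintro ⟨⟨h1, h2⟩, h3, h4⟩
    exact ⟨h1, h2, h3, fun j hj1 hj2 => h4 j ⟨hj1, hj2⟩⟩
  · rintro ⟨h1, h2, h3, h4⟩
    exact ⟨⟨h1, h2⟩, h3, fun j hj => h4 j hj.1 hj.2⟩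

lemma lastIdx_eq_liOf {Q : CacheRun S k T σ} {s i : ℕ} (h : i ∈ lastIdx Q s) :
    i = liOf σ (σ i) s := by
  obtain ⟨h1, h2, h3, h4⟩ := mem_lastIdx_iff.1 h
  exact (liOf_eq_of h1 h2 rfl h4).symm

lemma liOf_mem_lastIdx {Q : CacheRun S k T σ} {s : ℕ} (hs : s ≤ T) {x : S}
    (hx : x ∈ Q.C s) : liOf σ x s ∈ lastIdx Q s ∧ σ (liOf σ x s) = x := by
  obtain ⟨i, hi1, hi2, hi3⟩ := mem_C_occ Q hs hx
  obtain ⟨hl1, hl2⟩ := liOf_spec hi1 hi2 hi3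
  refine ⟨mem_lastIdx_iff.2 ⟨hl1, liOf_le, by rwa [hl2], fun j hj1 hj2 => ?_⟩, hl2⟩
  rw [hl2]
  exact liOf_no_later hj1 hj2

lemma nextReq_lastIdx {Q : CacheRun S k T σ} {s i : ℕ} (h : i ∈ lastIdx Q s) :
    nextReq σ T i = nuOf σ T (σ i) s := by
  rw [nuOf, ← lastIdx_eq_liOf h]

/-- A mistake at time `u`: some strictly better eviction candidate exists. -/
def Mst (Q : CacheRun S k T σ) (u : ℕ) : Prop :=
  ∃ j, EvictsIdx Q u j ∧ ∃ i ∈ lastIdx Q (u - 1), nextReq σ T j < nextReq σ T i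

lemma not_Mst_of_not_evict {Q : CacheRun S k T σ} {u : ℕ} (h : ¬ EvictStep Q u) :
    ¬ Mst Q u := fun ⟨_, hj, _⟩ => h hj.1

/-- Page-level characterization of a mistake. -/
lemma Mst_iff_page {Q : CacheRun S k T σ} {u : ℕ} (hE : EvictStep Q u) :
    Mst Q u ↔ ∃ x ∈ Q.C (u-1), nuOf σ T (Q.p u) (u-1) < nuOf σ T x (u-1) := by
  obtain ⟨h1, h2, h3, h4⟩ := id hE
  have hpmem : Q.p u ∈ Q.C (u-1) := Q.evict_mem u h1 h2 h3 h4
  have hs : u - 1 ≤ T := by omega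
  constructor
  · rintro ⟨j, ⟨_, hjmem, hjp⟩, i, himem, hlt⟩
    refine ⟨σ i, (mem_lastIdx_iff.1 himem).2.2.1, ?_⟩
    have hjnu : nextReq σ T j = nuOf σ T (Q.p u) (u-1) := by
      rw [hjp]; exact nextReq_lastIdx hjmem
    rw [← hjnu, ← nextReq_lastIdx himem]
    exact hlt
  · rintro ⟨x, hxmem, hlt⟩
    obtain ⟨hjm, hjσ⟩ := liOf_mem_lastIdx (Q := Q) hs hpmem
    obtain ⟨him, hiσ⟩ := liOf_mem_lastIdx (Q := Q) hs hxmem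
    refine ⟨liOf σ (Q.p u) (u-1), ⟨hE, hjm, hjσ.symm⟩, liOf σ x (u-1), him, ?_⟩
    rw [nextReq_lastIdx hjm, nextReq_lastIdx him, hjσ, hiσ]
    exact hlt

/-- Mistakes and misses only depend on caches and evicted pages. -/
lemma lastIdx_congr {Q Q' : CacheRun S k T σ} {s : ℕ} (h : Q.C s = Q'.C s) :
    lastIdx Q s = lastIdx Q' s := by
  unfold lastIdx; rw [h]

lemma Mst_congr {Q Q' : CacheRun S k T σ} {u : ℕ} (hC : Q.C (u-1) = Q'.C (u-1))
    (hp : Q.p u = Q'.p u) : Mst Q u ↔ Mst Q' u := by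
  have hE : EvictStep Q u ↔ EvictStep Q' u := by unfold EvictStep; rw [hC]
  unfold Mst EvictsIdx
  rw [lastIdx_congr hC, hE, hp]

/-- Prefix miss count. -/
noncomputable def msCnt (Q : CacheRun S k T σ) (u : ℕ) : ℕ :=
  ((Finset.Icc 1 u).filter fun v => σ v ∉ Q.C (v-1)).card

/-- Prefix mistake count. -/
noncomputable def mkCnt (Q : CacheRun S k T σ) (u : ℕ) : ℕ :=
  ((Finset.Icc 1 u).filter (Mst Q)).card

lemma cnt_succ (P : ℕ → Prop) [DecidablePred P] (u : ℕ) :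
    ((Finset.Icc 1 (u+1)).filter P).card
      = ((Finset.Icc 1 u).filter P).card + (if P (u+1) then 1 else 0) := by
  have h : Finset.Icc 1 (u+1) = insert (u+1) (Finset.Icc 1 u) := by
    rw [← Finset.insert_Icc_right_eq_Icc_add_one (by omega)]
  rw [h, Finset.filter_insert]
  split
  · rw [Finset.card_insert_of_notMem (by simp)]
  · simp

lemma msCnt_succ (Q : CacheRun S k T σ) (u : ℕ) :
    msCnt Q (u+1) = msCnt Q u + (if σ (u+1) ∉ Q.C u then 1 else 0) := by
  have h := cnt_succ (fun v => σ v ∉ Q.C (v-1)) u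
  simpa only [msCnt, Nat.add_sub_cancel] using h

lemma mkCnt_succ (Q : CacheRun S k T σ) (u : ℕ) :
    mkCnt Q (u+1) = mkCnt Q u + (if Mst Q (u+1) then 1 else 0) := by
  exact cnt_succ (Mst Q) u

lemma misses_eq_msCnt (Q : CacheRun S k T σ) : misses Q = msCnt Q T := rfl

end Stmt3Aux3
section Stmt3Aux4

variable {k T : ℕ} {σ : ℕ → S}

noncomputable def pick (s : Finset S) (d : S) : S := s.toList.headD d

lemma pick_mem {s : Finset S} {d : S} (h : s.Nonempty) : pick s d ∈ s := by
  unfold pick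
  obtain ⟨x, xs, hl⟩ : ∃ x xs, s.toList = x :: xs := by
    cases hlc : s.toList with
    | nil => exact absurd (Finset.toList_eq_nil.1 hlc) h.ne_empty
    | cons x xs => exact ⟨x, xs, rfl⟩
  rw [hl, List.headD_cons]
  exact Finset.mem_toList.1 (hl ▸ (List.mem_cons_self : x ∈ x :: xs))

lemma pick_singleton (a d : S) : pick {a} d = a := by
  unfold pick
  rw [Finset.toList_singleton]
  rfl

/-- Raw eviction policy of the hybrid strategy. -/
noncomputable def rawpol (R A : CacheRun S k T σ) (t u : ℕ) (Cp : Finset S) : S :=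
  if u < t then R.p u
  else if u = t then A.p u
  else if Cp = R.C (u-1) then R.p u
  else if σ u ∈ R.C (u-1) then pick (Cp \ R.C (u-1)) (σ 0)
  else if R.p u ∉ Cp then pick (Cp \ R.C (u-1)) (σ 0)
  else if nuOf σ T (R.p u) (u-1) < nuOf σ T (pick (Cp \ R.C (u-1)) (σ 0)) (u-1) ∧
      nuOf σ T (pick (R.C (u-1) \ Cp) (σ 0)) (u-1) ≤ nuOf σ T (R.p u) (u-1)
    then pick (Cp \ R.C (u-1)) (σ 0)
  else R.p u

/-- Safe policy: falls back to an arbitrary cached page. -/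
noncomputable def polF (R A : CacheRun S k T σ) (t u : ℕ) (Cp : Finset S) : S :=
  if rawpol R A t u Cp ∈ Cp then rawpol R A t u Cp else pick Cp (σ 0)

lemma polF_mem {R A : CacheRun S k T σ} {t u : ℕ} {Cp : Finset S} (h : Cp.Nonempty) :
    polF R A t u Cp ∈ Cp := by
  unfold polF
  split
  · assumption
  · exact pick_mem h

lemma polF_eq {R A : CacheRun S k T σ} {t u : ℕ} {Cp : Finset S}
    (h : rawpol R A t u Cp ∈ Cp) : polF R A t u Cp = rawpol R A t u Cp := if_pos h

/-- Cache sequence of the hybrid run. -/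
noncomputable def hyC (R A : CacheRun S k T σ) (t : ℕ) : ℕ → Finset S
  | 0 => ∅
  | (s+1) =>
    let Cp := hyC R A t s
    if s + 1 ≤ T then
      (if σ (s+1) ∈ Cp ∨ Cp.card < k then insert (σ (s+1)) Cp
       else insert (σ (s+1)) (Cp.erase (polF R A t (s+1) Cp)))
    else Cp

noncomputable def hyP (R A : CacheRun S k T σ) (t : ℕ) (u : ℕ) : S :=
  polF R A t u (hyC R A t (u-1))

lemma hyC_succ_hit {R A : CacheRun S k T σ} {t s : ℕ} (hs : s + 1 ≤ T)
    (h : σ (s+1) ∈ hyC R A t s ∨ (hyC R A t s).card < k) :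
    hyC R A t (s+1) = insert (σ (s+1)) (hyC R A t s) := by
  rw [hyC]
  simp only [hs, if_true, h, if_true]

lemma hyC_succ_evict {R A : CacheRun S k T σ} {t s : ℕ} (hs : s + 1 ≤ T)
    (h : ¬(σ (s+1) ∈ hyC R A t s ∨ (hyC R A t s).card < k)) :
    hyC R A t (s+1) = insert (σ (s+1)) ((hyC R A t s).erase (hyP R A t (s+1))) := by
  rw [hyC]
  simp only [hs, if_true, h, if_false, hyP, Nat.add_sub_cancel]

lemma hyC_card_le (hk : 1 ≤ k) (R A : CacheRun S k T σ) (t : ℕ) (s : ℕ) :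
    (hyC R A t s).card ≤ k := by
  induction s with
  | zero => simp [hyC]
  | succ s ih =>
    by_cases hs : s + 1 ≤ T
    · by_cases h : σ (s+1) ∈ hyC R A t s ∨ (hyC R A t s).card < k
      · rw [hyC_succ_hit hs h]
        rcases h with h | h
        · rwa [Finset.insert_eq_self.2 h]
        · exact le_trans (Finset.card_insert_le _ _) (by omega)
      · push_neg at h
        have hcard : (hyC R A t s).card = k := le_antisymm ih h.2
        have hne : (hyC R A t s).Nonempty := Finset.card_pos.1 (by omega)
        rw [hyC_succ_evict hs (by push_neg; exact h)]
        have hmem : hyP R A t (s+1) ∈ hyC R A t s := by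
          rw [hyP, Nat.add_sub_cancel]; exact polF_mem hne
        rw [Finset.card_insert_of_notMem (fun hc => h.1 (Finset.mem_of_mem_erase hc)),
          Finset.card_erase_of_mem hmem]
        omega
    · rw [hyC]
      simp only [hs, if_false]
      exact ih

/-- The hybrid run as a `CacheRun`. -/
noncomputable def hyb (hk : 1 ≤ k) (R A : CacheRun S k T σ) (t : ℕ) : CacheRun S k T σ where
  C := hyC R A t
  p := hyP R A t
  init := rfl
  card_le := hyC_card_le hk R A t
  hit := by
    intro u h1 h2 h
    obtain ⟨s, rfl⟩ : ∃ s, u = s + 1 := ⟨u - 1, by omega⟩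
    simp only [Nat.add_sub_cancel] at h ⊢
    exact hyC_succ_hit h2 h
  evict_mem := by
    intro u h1 h2 h3 h4
    obtain ⟨s, rfl⟩ : ∃ s, u = s + 1 := ⟨u - 1, by omega⟩
    simp only [Nat.add_sub_cancel] at h3 h4 ⊢
    have hne : (hyC R A t s).Nonempty := Finset.card_pos.1 (by omega)
    rw [hyP, Nat.add_sub_cancel]
    exact polF_mem hne
  evict := by
    intro u h1 h2 h3 h4
    obtain ⟨s, rfl⟩ : ∃ s, u = s + 1 := ⟨u - 1, by omega⟩
    simp only [Nat.add_sub_cancel] at h3 h4 ⊢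
    exact hyC_succ_evict h2 (by push_neg; exact ⟨h3, by omega⟩)

lemma hyb_C (hk : 1 ≤ k) (R A : CacheRun S k T σ) (t : ℕ) :
    (hyb hk R A t).C = hyC R A t := rfl

lemma hyb_p (hk : 1 ≤ k) (R A : CacheRun S k T σ) (t : ℕ) :
    (hyb hk R A t).p = hyP R A t := rfl

/-- Before time `t`, the hybrid run copies `R`. -/
lemma hyC_pre (R A : CacheRun S k T σ) {t : ℕ} (ht : t ≤ T) :
    ∀ s, s < t → hyC R A t s = R.C s := by
  intro s
  induction s with
  | zero => intro _; rw [R.init]; rfl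
  | succ s ih =>
    intro hst
    have hCs : hyC R A t s = R.C s := ih (by omega)
    have hs1 : s + 1 ≤ T := by omega
    rcases step_cases R (u := s+1) (by omega) hs1 with ⟨h, hc⟩ | ⟨h1, h2, h3, h4⟩
    · simp only [Nat.add_sub_cancel] at h hc
      rw [hyC_succ_hit hs1 (by rw [hCs]; exact hc), hCs, ← h]
    · simp only [Nat.add_sub_cancel] at h1 h2 h3 h4
      have hraw : rawpol R A t (s+1) (R.C s) = R.p (s+1) := by
        unfold rawpol
        rw [if_pos hst]
      have hpol : hyP R A t (s+1) = R.p (s+1) := by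
        rw [hyP, Nat.add_sub_cancel, hCs, polF, hraw, if_pos h3]
      rw [hyC_succ_evict hs1 (by rw [hCs]; push_neg; exact ⟨h1, by omega⟩), hCs, hpol, ← h4]

end Stmt3Aux4
section Stmt3Aux5

variable {k T : ℕ} {σ : ℕ → S}

lemma sdiff_pair_left {C : Finset S} {a b : S} (ha : a ∉ C) (hb : b ∈ C) :
    insert a (C.erase b) \ C = {a} := by
  ext y
  simp only [Finset.mem_sdiff, Finset.mem_insert, Finset.mem_erase, Finset.mem_singleton]
  constructor
  · rintro ⟨h1 | ⟨h1, h2⟩, h3⟩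
    · exact h1
    · exact absurd h2 h3
  · rintro rfl
    exact ⟨Or.inl rfl, ha⟩

lemma sdiff_pair_right {C : Finset S} {a b : S} (ha : a ∉ C) (hb : b ∈ C) :
    C \ insert a (C.erase b) = {b} := by
  ext y
  simp only [Finset.mem_sdiff, Finset.mem_insert, Finset.mem_erase, Finset.mem_singleton]
  constructor
  · rintro ⟨h1, h2⟩
    push_neg at h2
    rcases h2 with ⟨h2, h3⟩
    by_contra hyb'
    exact (h3 hyb' h1).elim
  · rintro rfl
    refine ⟨hb, ?_⟩
    push_neg
    exact ⟨fun hc => ha (hc ▸ hb), fun hc => absurd rfl hc⟩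

lemma card_insert_erase {C : Finset S} {a b : S} (ha : a ∉ C) (hb : b ∈ C) :
    (insert a (C.erase b)).card = C.card := by
  rw [Finset.card_insert_of_notMem (fun hc => ha (Finset.mem_of_mem_erase hc)),
    Finset.card_erase_of_mem hb]
  have : 1 ≤ C.card := Finset.card_pos.2 ⟨b, hb⟩
  omega

lemma mem_insert_erase_iff {C : Finset S} {a b y : S} :
    y ∈ insert a (C.erase b) ↔ y = a ∨ (y ≠ b ∧ y ∈ C) := by
  simp [Finset.mem_insert, Finset.mem_erase]

lemma ident1 {C : Finset S} {a b p : S} (ha : a ∉ C) (hb : b ∈ C) (hp : p ∈ C)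
    (hpb : p ≠ b) : insert a (C.erase b) = insert p ((insert a (C.erase p)).erase b) := by
  have hab : a ≠ b := fun hc => ha (hc ▸ hb)
  have hap : a ≠ p := fun hc => ha (hc ▸ hp)
  ext y
  simp only [mem_insert_erase_iff, Finset.mem_insert, Finset.mem_erase]
  constructor
  · rintro (rfl | ⟨h1, h2⟩)
    · exact Or.inr ⟨hab, Or.inl rfl⟩
    · by_cases hyp : y = p
      · exact Or.inl hyp
      · exact Or.inr ⟨h1, Or.inr ⟨hyp, h2⟩⟩
  · rintro (rfl | ⟨h1, rfl | ⟨h2, h3⟩⟩)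
    · exact Or.inr ⟨hpb, hp⟩
    · exact Or.inl rfl
    · exact Or.inr ⟨h1, h3⟩

lemma ident2 {C : Finset S} {b p x : S} (hb : b ∈ C) (hp : p ∈ C)
    (hpb : p ≠ b) (hx : x ∉ C) :
    insert x (C.erase b) = insert p ((insert x (C.erase p)).erase b) := by
  have hxb : x ≠ b := fun hc => hx (hc ▸ hb)
  have hxp : x ≠ p := fun hc => hx (hc ▸ hp)
  ext y
  simp only [mem_insert_erase_iff, Finset.mem_insert, Finset.mem_erase]
  constructor
  · rintro (rfl | ⟨h1, h2⟩)
    · exact Or.inr ⟨hxb, Or.inl rfl⟩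
    · by_cases hyp : y = p
      · exact Or.inl hyp
      · exact Or.inr ⟨h1, Or.inr ⟨hyp, h2⟩⟩
  · rintro (rfl | ⟨h1, rfl | ⟨h2, h3⟩⟩)
    · exact Or.inr ⟨hpb, hp⟩
    · exact Or.inl rfl
    · exact Or.inr ⟨h1, h3⟩

lemma ident3 {C : Finset S} {a b p x : S} (ha : a ∉ C) (hb : b ∈ C) (hp : p ∈ C)
    (hpb : p ≠ b) (hx : x ∉ C) (hxa : x ≠ a) :
    insert x ((insert a (C.erase b)).erase p) = insert a ((insert x (C.erase p)).erase b) := by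
  have hab : a ≠ b := fun hc => ha (hc ▸ hb)
  have hap : a ≠ p := fun hc => ha (hc ▸ hp)
  have hxb : x ≠ b := fun hc => hx (hc ▸ hb)
  have hxp : x ≠ p := fun hc => hx (hc ▸ hp)
  ext y
  simp only [Finset.mem_insert, Finset.mem_erase, mem_insert_erase_iff]
  by_cases h1 : y = a <;> by_cases h2 : y = b <;> by_cases h3 : y = p <;>
    by_cases h4 : y = x <;> by_cases h5 : y ∈ C <;> simp_all

/-- The balance inequality between `R` and the hybrid run `B` up to time `u`. -/
def Bal (R B : CacheRun S k T σ) (u c : ℕ) : Prop :=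
  msCnt R u + mkCnt B u + c ≤ msCnt B u + mkCnt R u

/-- The coupling invariant. -/
def InvSt (R B : CacheRun S k T σ) (u : ℕ) : Prop :=
  (B.C u = R.C u ∧ Bal R B u 0) ∨
  ∃ a b, (B.C u = insert a ((R.C u).erase b) ∧ a ∉ R.C u ∧ b ∈ R.C u ∧ (R.C u).card = k) ∧
    ((nuOf σ T a u < nuOf σ T b u ∧ Bal R B u 1) ∨
     (nuOf σ T b u ≤ nuOf σ T a u ∧ Bal R B u 0))

end Stmt3Aux5
section Stmt3Aux6

variable {k T : ℕ} {σ : ℕ → S}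

lemma mst_bit_le (Q : CacheRun S k T σ) (u : ℕ) : (if Mst Q u then 1 else 0 : ℕ) ≤ 1 := by
  split <;> omega

lemma mst_bit_trans {Q Q' : CacheRun S k T σ} {u : ℕ} (h : Mst Q u → Mst Q' u) :
    (if Mst Q u then 1 else 0 : ℕ) ≤ (if Mst Q' u then 1 else 0 : ℕ) := by
  by_cases hm : Mst Q u
  · rw [if_pos hm, if_pos (h hm)]
  · rw [if_neg hm]; omega

lemma inv_step (hk : 1 ≤ k) (R A : CacheRun S k T σ) (t : ℕ) {s : ℕ}
    (hts : t ≤ s) (hsT : s + 1 ≤ T) (hinv : InvSt R (hyb hk R A t) s) :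
    InvSt R (hyb hk R A t) (s+1) := by
  have hu1 : (1:ℕ) ≤ s + 1 := by omega
  have hnotlt : ¬ (s + 1 < t) := by omega
  have hnoteq : ¬ (s + 1 = t) := by omega
  set B := hyb hk R A t with hB
  have hmsR := msCnt_succ R s
  have hmsB := msCnt_succ B s
  have hmkR := mkCnt_succ R s
  have hmkB := mkCnt_succ B s
  have hmkR_le := mst_bit_le R (s+1)
  have hmkB_le := mst_bit_le B (s+1)
  have hBp : B.p (s+1) = polF R A t (s+1) (B.C s) := rfl
  rcases hinv with ⟨hCeq, hbal⟩ | ⟨a, b, ⟨hCB, ha, hb, hcard⟩, hcls⟩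
  · -- merged state
    rcases step_cases R hu1 hsT with ⟨h, hc⟩ | ⟨h1, h2, h3, h4⟩ <;>
      simp only [Nat.add_sub_cancel] at *
    · -- hit / non-full step
      have hBC : B.C (s+1) = R.C (s+1) := by
        rw [B.hit (s+1) hu1 hsT (by simpa only [Nat.add_sub_cancel, hCeq] using hc), h]
        simp only [Nat.add_sub_cancel, hCeq]
      have hnm : ¬ Mst R (s+1) := not_Mst_of_not_evict
        (fun hE => by
          obtain ⟨_, _, hE3, hE4⟩ := hE
          simp only [Nat.add_sub_cancel] at hE3 hE4
          rcases hc with hc | hc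
          · exact hE3 hc
          · omega)
      have hnm' : ¬ Mst B (s+1) := not_Mst_of_not_evict
        (fun hE => by
          obtain ⟨_, _, hE3, hE4⟩ := hE
          simp only [Nat.add_sub_cancel, hCeq] at hE3 hE4
          rcases hc with hc | hc
          · exact hE3 hc
          · omega)
      rw [if_neg hnm] at hmkR
      rw [if_neg hnm'] at hmkB
      rw [hCeq] at hmsB
      refine Or.inl ⟨hBC, ?_⟩
      unfold Bal at hbal ⊢
      rw [hmsR, hmsB, hmkR, hmkB]
      omega
    · -- eviction step
      have hraw : rawpol R A t (s+1) (B.C s) = R.p (s+1) := by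
        unfold rawpol
        rw [if_neg hnotlt, if_neg hnoteq]
        simp only [Nat.add_sub_cancel]
        rw [if_pos hCeq]
      have hp : B.p (s+1) = R.p (s+1) := by
        rw [hBp]; unfold polF; rw [hraw, if_pos (by rw [hCeq]; exact h3)]
      have hBC : B.C (s+1) = R.C (s+1) := by
        rw [B.evict (s+1) hu1 hsT (by simpa only [Nat.add_sub_cancel, hCeq] using h1)
            (by simpa only [Nat.add_sub_cancel, hCeq] using h2), h4]
        simp only [Nat.add_sub_cancel, hCeq, hp]
      have hmle : (if Mst B (s+1) then 1 else 0 : ℕ) ≤ (if Mst R (s+1) then 1 else 0) :=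
        mst_bit_trans (fun hm =>
          (Mst_congr (by simpa only [Nat.add_sub_cancel] using hCeq) hp).1 hm)
      rw [hCeq] at hmsB
      refine Or.inl ⟨hBC, ?_⟩
      unfold Bal at hbal ⊢
      rw [hmsR, hmsB, hmkR, hmkB]
      omega
  · -- diff state, pair (a, b)
    have hab : a ≠ b := fun hc => ha (hc ▸ hb)
    have hcardB : (B.C s).card = k := by rw [hCB, card_insert_erase ha hb]; exact hcard
    have hsdl : B.C s \ R.C s = {a} := by rw [hCB]; exact sdiff_pair_left ha hb
    have hsdr : R.C s \ B.C s = {b} := by rw [hCB]; exact sdiff_pair_right ha hb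
    have haB : a ∈ B.C s := by rw [hCB]; exact Finset.mem_insert_self a _
    have hbB : b ∉ B.C s := by
      rw [hCB, mem_insert_erase_iff]
      rintro (h | h)
      · exact hab (h.symm)
      · exact h.1 rfl
    have hBne : B.C s ≠ R.C s := fun hc => ha (hc ▸ haB)
    have hpickA : pick (B.C s \ R.C s) (σ 0) = a := by rw [hsdl]; exact pick_singleton a _
    have hpickB : pick (R.C s \ B.C s) (σ 0) = b := by rw [hsdr]; exact pick_singleton b _
    obtain ⟨ia, hia1, hia2, hia3⟩ := mem_C_occ B (by omega) haB
    obtain ⟨ib, hib1, hib2, hib3⟩ := mem_C_occ R (by omega) hb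
    have hνa_gt : s < nuOf σ T a s := nuOf_gt (by omega) hia1 hia2 hia3
    have hνb_gt : s < nuOf σ T b s := nuOf_gt (by omega) hib1 hib2 hib3
    by_cases hxC : σ (s+1) ∈ R.C s
    · have hnmR : ¬ Mst R (s+1) := not_Mst_of_not_evict
        (fun hE => hE.2.2.1 (by simpa only [Nat.add_sub_cancel] using hxC))
      rw [if_neg hnmR] at hmkR
      rw [if_neg (not_not_intro hxC)] at hmsR
      have hRC : R.C (s+1) = R.C s := by
        rw [R.hit (s+1) hu1 hsT (by simpa only [Nat.add_sub_cancel] using Or.inl hxC)]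
        simp only [Nat.add_sub_cancel]
        exact Finset.insert_eq_self.2 hxC
      by_cases hxb : σ (s+1) = b
      · -- request for b : only possible in the B-type state; caches merge
        have hνb_eq : nuOf σ T b s = s + 1 :=
          (nuOf_eq_succ_iff hsT hib1 hib2 hib3).2 hxb
        rcases hcls with ⟨hlt, hbal⟩ | ⟨hle, hbal⟩
        · exact absurd hνb_eq (by omega)
        · have hraw : rawpol R A t (s+1) (B.C s) = a := by
            unfold rawpol
            rw [if_neg hnotlt, if_neg hnoteq]
            simp only [Nat.add_sub_cancel]
            rw [if_neg hBne, if_pos hxC, hpickA]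
          have hq : B.p (s+1) = a := by
            rw [hBp]; unfold polF; rw [hraw, if_pos haB]
          have hxB : σ (s+1) ∉ B.C s := by rw [hxb]; exact hbB
          have hBC : B.C (s+1) = R.C s := by
            rw [B.evict (s+1) hu1 hsT (by simpa only [Nat.add_sub_cancel] using hxB)
                (by simpa only [Nat.add_sub_cancel] using hcardB)]
            simp only [Nat.add_sub_cancel]
            rw [hq, hCB, Finset.erase_insert (fun hc => ha (Finset.mem_of_mem_erase hc)),
              hxb, Finset.insert_erase hb]
          rw [if_pos hxB] at hmsB
          refine Or.inl ⟨hBC.trans hRC.symm, ?_⟩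
          unfold Bal at hbal ⊢
          rw [hmsR, hmsB, hmkR, hmkB]
          omega
      · -- request in the common part: both hit
        have hxB : σ (s+1) ∈ B.C s := by
          rw [hCB, mem_insert_erase_iff]; exact Or.inr ⟨hxb, hxC⟩
        have hxa : σ (s+1) ≠ a := fun hc => ha (hc ▸ hxC)
        have hBC : B.C (s+1) = B.C s := by
          rw [B.hit (s+1) hu1 hsT (by simpa only [Nat.add_sub_cancel] using Or.inl hxB)]
          simp only [Nat.add_sub_cancel]
          exact Finset.insert_eq_self.2 hxB
        have hnmB : ¬ Mst B (s+1) := not_Mst_of_not_evict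
          (fun hE => hE.2.2.1 (by simpa only [Nat.add_sub_cancel] using hxB))
        rw [if_neg hnmB] at hmkB
        rw [if_neg (not_not_intro hxB)] at hmsB
        have hstab_a : nuOf σ T a (s+1) = nuOf σ T a s := nuOf_succ_ne hxa
        have hstab_b : nuOf σ T b (s+1) = nuOf σ T b s := nuOf_succ_ne hxb
        have hbal' : ∀ c, Bal R B s c → Bal R B (s+1) c := by
          intro c hbal
          unfold Bal at hbal ⊢
          rw [hmsR, hmsB, hmkR, hmkB]
          omega
        refine Or.inr ⟨a, b, ⟨by rw [hBC, hRC]; exact hCB, by rwa [hRC], by rwa [hRC],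
          by rwa [hRC]⟩, ?_⟩
        rcases hcls with ⟨hlt, hbal⟩ | ⟨hle, hbal⟩
        · exact Or.inl ⟨by rw [hstab_a, hstab_b]; exact hlt, hbal' 1 hbal⟩
        · exact Or.inr ⟨by rw [hstab_a, hstab_b]; exact hle, hbal' 0 hbal⟩
    · -- R misses
      have hER : EvictStep R (s+1) :=
        ⟨hu1, hsT, by simpa only [Nat.add_sub_cancel] using hxC,
          by simpa only [Nat.add_sub_cancel] using hcard⟩
      obtain ⟨hp3, hRC⟩ : R.p (s+1) ∈ R.C s ∧
          R.C (s+1) = insert (σ (s+1)) ((R.C s).erase (R.p (s+1))) := by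
        have h1 := R.evict_mem (s+1) hu1 hsT (by simpa using hxC) (by simpa using hcard)
        have h2 := R.evict (s+1) hu1 hsT (by simpa using hxC) (by simpa using hcard)
        simp only [Nat.add_sub_cancel] at h1 h2
        exact ⟨h1, h2⟩
      have hxb : σ (s+1) ≠ b := fun hc => hxC (hc ▸ hb)
      obtain ⟨ip, hip1, hip2, hip3⟩ := mem_C_occ R (s := s) (by omega) hp3
      have hMstR_iff := Mst_iff_page hER
      simp only [Nat.add_sub_cancel] at hMstR_iff
      rw [if_pos hxC] at hmsR
      by_cases hxa : σ (s+1) = a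
      · -- request for a : only possible in G-type state; B hits, R evicts
        have hνa_eq : nuOf σ T a s = s + 1 :=
          (nuOf_eq_succ_iff hsT hia1 hia2 hia3).2 hxa
        rcases hcls with ⟨hlt, hbal⟩ | ⟨hle, hbal⟩
        swap
        · -- B-type state: contradiction
          exfalso
          have hbeq : nuOf σ T b s = s + 1 := by omega
          exact hxb ((nuOf_eq_succ_iff hsT hib1 hib2 hib3).1 hbeq)
        · have hxB : σ (s+1) ∈ B.C s := hxa ▸ haB
          have hBC : B.C (s+1) = B.C s := by
            rw [B.hit (s+1) hu1 hsT (by simpa only [Nat.add_sub_cancel] using Or.inl hxB)]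
            simp only [Nat.add_sub_cancel]
            exact Finset.insert_eq_self.2 hxB
          have hnmB : ¬ Mst B (s+1) := not_Mst_of_not_evict
            (fun hE => hE.2.2.1 (by simpa only [Nat.add_sub_cancel] using hxB))
          rw [if_neg hnmB] at hmkB
          rw [if_neg (not_not_intro hxB)] at hmsB
          by_cases hpb : R.p (s+1) = b
          · -- merge
            refine Or.inl ⟨?_, ?_⟩
            · rw [hBC, hCB, hRC, hpb, hxa]
            · unfold Bal at hbal ⊢
              rw [hmsR, hmsB, hmkR, hmkB]
              omega
          · -- new pair (p, b)
            have hpa : R.p (s+1) ≠ a := fun hc => ha (hc ▸ hp3)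
            have hCB' : B.C (s+1) = insert (R.p (s+1)) ((R.C (s+1)).erase b) := by
              rw [hBC, hCB, hRC, hxa]
              exact ident1 ha hb hp3 hpb
            have hpmem' : R.p (s+1) ∉ R.C (s+1) := by
              rw [hRC, mem_insert_erase_iff]
              rintro (hc | hc)
              · exact hxC (hc ▸ hp3)
              · exact hc.1 rfl
            have hbmem' : b ∈ R.C (s+1) := by
              rw [hRC, mem_insert_erase_iff]
              exact Or.inr ⟨fun hc => hpb hc.symm, hb⟩
            have hcard' : (R.C (s+1)).card = k := by
              rw [hRC, card_insert_erase (by simpa using hxC) hp3]; exact hcard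
            have hstab_p : nuOf σ T (R.p (s+1)) (s+1) = nuOf σ T (R.p (s+1)) s :=
              nuOf_succ_ne (fun hc => hxC (hc ▸ hp3))
            have hstab_b : nuOf σ T b (s+1) = nuOf σ T b s := nuOf_succ_ne hxb
            refine Or.inr ⟨R.p (s+1), b, ⟨hCB', hpmem', hbmem', hcard'⟩, ?_⟩
            by_cases hpltb : nuOf σ T (R.p (s+1)) s < nuOf σ T b s
            · -- stays G; R makes a mistake now
              have hmR : Mst R (s+1) := hMstR_iff.2 ⟨b, hb, hpltb⟩
              rw [if_pos hmR] at hmkR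
              refine Or.inl ⟨by rw [hstab_p, hstab_b]; exact hpltb, ?_⟩
              unfold Bal at hbal ⊢
              rw [hmsR, hmsB, hmkR, hmkB]
              omega
            · -- becomes B-type
              refine Or.inr ⟨by rw [hstab_p, hstab_b]; omega, ?_⟩
              unfold Bal at hbal ⊢
              rw [hmsR, hmsB, hmkR, hmkB]
              omega
      · -- request outside both caches: both evict
        have hxB : σ (s+1) ∉ B.C s := by
          rw [hCB, mem_insert_erase_iff]
          rintro (hc | hc)
          · exact hxa hc
          · exact hxC hc.2
        have hEB : EvictStep B (s+1) :=
          ⟨hu1, hsT, by simpa only [Nat.add_sub_cancel] using hxB,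
            by simpa only [Nat.add_sub_cancel] using hcardB⟩
        have hBCe : B.C (s+1) = insert (σ (s+1)) ((B.C s).erase (B.p (s+1))) := by
          have := B.evict (s+1) hu1 hsT (by simpa using hxB) (by simpa using hcardB)
          simpa only [Nat.add_sub_cancel] using this
        have hMstB_iff := Mst_iff_page hEB
        simp only [Nat.add_sub_cancel] at hMstB_iff
        have hstab_b : nuOf σ T b (s+1) = nuOf σ T b s := nuOf_succ_ne hxb
        have hstab_a : nuOf σ T a (s+1) = nuOf σ T a s := nuOf_succ_ne hxa
        rw [if_pos hxB] at hmsB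
        by_cases hpB : R.p (s+1) ∈ B.C s
        · -- R's victim is in both caches (p ≠ b)
          have hpb : R.p (s+1) ≠ b := fun hc => hbB (hc ▸ hpB)
          have hpa : R.p (s+1) ≠ a := fun hc => ha (hc ▸ hp3)
          have hstab_p : nuOf σ T (R.p (s+1)) (s+1) = nuOf σ T (R.p (s+1)) s :=
            nuOf_succ_ne (fun hc => hxC (hc ▸ hp3))
          by_cases hcond : nuOf σ T (R.p (s+1)) s < nuOf σ T a s ∧
              nuOf σ T b s ≤ nuOf σ T (R.p (s+1)) s
          · -- B evicts a; new pair (p, b), B-type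
            have hraw : rawpol R A t (s+1) (B.C s) = a := by
              unfold rawpol
              rw [if_neg hnotlt, if_neg hnoteq]
              simp only [Nat.add_sub_cancel]
              rw [if_neg hBne, if_neg hxC, if_neg (by simpa using hpB), hpickA, hpickB,
                if_pos hcond]
            have hq : B.p (s+1) = a := by
              rw [hBp]; unfold polF; rw [hraw, if_pos haB]
            have hBC : B.C (s+1) = insert (σ (s+1)) ((R.C s).erase b) := by
              rw [hBCe, hq, hCB,
                Finset.erase_insert (fun hc => ha (Finset.mem_of_mem_erase hc))]
            have hCB' : B.C (s+1) = insert (R.p (s+1)) ((R.C (s+1)).erase b) := by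
              rw [hBC, hRC]
              exact ident2 hb hp3 hpb (by simpa using hxC)
            have hpmem' : R.p (s+1) ∉ R.C (s+1) := by
              rw [hRC, mem_insert_erase_iff]
              rintro (hc | hc)
              · exact hxC (hc ▸ hp3)
              · exact hc.1 rfl
            have hbmem' : b ∈ R.C (s+1) := by
              rw [hRC, mem_insert_erase_iff]
              exact Or.inr ⟨fun hc => hpb hc.symm, hb⟩
            have hcard' : (R.C (s+1)).card = k := by
              rw [hRC, card_insert_erase (by simpa using hxC) hp3]; exact hcard
            have hmtrans : Mst B (s+1) → Mst R (s+1) := by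
              intro hm
              obtain ⟨w, hwB, hwν⟩ := hMstB_iff.1 hm
              rw [hq] at hwν
              have hwa : w ≠ a := fun hc => by rw [hc] at hwν; omega
              have hwC : w ∈ R.C s := by
                rw [hCB, mem_insert_erase_iff] at hwB
                rcases hwB with hc | hc
                · exact absurd hc hwa
                · exact hc.2
              exact hMstR_iff.2 ⟨w, hwC, by omega⟩
            have hmle := mst_bit_trans hmtrans
            refine Or.inr ⟨R.p (s+1), b, ⟨hCB', hpmem', hbmem', hcard'⟩,
              Or.inr ⟨by rw [hstab_p, hstab_b]; exact hcond.2, ?_⟩⟩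
            rcases hcls with ⟨hlt, hbal⟩ | ⟨hle, hbal⟩ <;>
            · unfold Bal at hbal ⊢
              rw [hmsR, hmsB, hmkR, hmkB]
              omega
          · -- B evicts p as well; pair (a, b) persists
            have hraw : rawpol R A t (s+1) (B.C s) = R.p (s+1) := by
              unfold rawpol
              rw [if_neg hnotlt, if_neg hnoteq]
              simp only [Nat.add_sub_cancel]
              rw [if_neg hBne, if_neg hxC, if_neg (by simpa using hpB), hpickA, hpickB,
                if_neg hcond]
            have hq : B.p (s+1) = R.p (s+1) := by
              rw [hBp]; unfold polF; rw [hraw, if_pos hpB]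
            have hCB' : B.C (s+1) = insert a ((R.C (s+1)).erase b) := by
              rw [hBCe, hq, hCB, hRC]
              exact ident3 ha hb hp3 hpb (by simpa using hxC) (fun hc => hxa hc)
            have hamem' : a ∉ R.C (s+1) := by
              rw [hRC, mem_insert_erase_iff]
              rintro (hc | hc)
              · exact hxa hc.symm
              · exact ha hc.2
            have hbmem' : b ∈ R.C (s+1) := by
              rw [hRC, mem_insert_erase_iff]
              exact Or.inr ⟨fun hc => hpb hc.symm, hb⟩
            have hcard' : (R.C (s+1)).card = k := by
              rw [hRC, card_insert_erase (by simpa using hxC) hp3]; exact hcard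
            have hmtrans : Mst B (s+1) → Mst R (s+1) := by
              intro hm
              obtain ⟨w, hwB, hwν⟩ := hMstB_iff.1 hm
              rw [hq] at hwν
              by_cases hwa : w = a
              · rw [hwa] at hwν
                have hgt : nuOf σ T (R.p (s+1)) s < nuOf σ T b s := by
                  by_contra hc
                  exact hcond ⟨hwν, by omega⟩
                exact hMstR_iff.2 ⟨b, hb, hgt⟩
              · have hwC : w ∈ R.C s := by
                  rw [hCB, mem_insert_erase_iff] at hwB
                  rcases hwB with hc | hc
                  · exact absurd hc hwa
                  · exact hc.2
                exact hMstR_iff.2 ⟨w, hwC, hwν⟩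
            have hmle := mst_bit_trans hmtrans
            refine Or.inr ⟨a, b, ⟨hCB', hamem', hbmem', hcard'⟩, ?_⟩
            have hbalstep : ∀ c, Bal R B s c → Bal R B (s+1) c := by
              intro c hbal
              unfold Bal at hbal ⊢
              rw [hmsR, hmsB, hmkR, hmkB]
              omega
            rcases hcls with ⟨hlt, hbal⟩ | ⟨hle, hbal⟩
            · exact Or.inl ⟨by rw [hstab_a, hstab_b]; exact hlt, hbalstep 1 hbal⟩
            · exact Or.inr ⟨by rw [hstab_a, hstab_b]; exact hle, hbalstep 0 hbal⟩
        · -- R's victim is b : B evicts a and the caches merge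
          have hpb : R.p (s+1) = b := by
            have hmem : R.p (s+1) ∈ R.C s \ B.C s := Finset.mem_sdiff.2 ⟨hp3, hpB⟩
            rw [hsdr] at hmem
            exact Finset.mem_singleton.1 hmem
          have hraw : rawpol R A t (s+1) (B.C s) = a := by
            unfold rawpol
            rw [if_neg hnotlt, if_neg hnoteq]
            simp only [Nat.add_sub_cancel]
            rw [if_neg hBne, if_neg hxC, if_pos (by simpa using hpB)]
            exact hpickA
          have hq : B.p (s+1) = a := by
            rw [hBp]; unfold polF; rw [hraw, if_pos haB]
          have hBC : B.C (s+1) = R.C (s+1) := by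
            rw [hBCe, hq, hCB,
              Finset.erase_insert (fun hc => ha (Finset.mem_of_mem_erase hc)), hRC, hpb]
          refine Or.inl ⟨hBC, ?_⟩
          rcases hcls with ⟨hlt, hbal⟩ | ⟨hle, hbal⟩
          · -- G-type : slack 1 absorbs a possible new mistake of B
            unfold Bal at hbal ⊢
            rw [hmsR, hmsB, hmkR, hmkB]
            omega
          · -- B-type : mistake transfer applies (ν b ≤ ν a)
            have hmtrans : Mst B (s+1) → Mst R (s+1) := by
              intro hm
              obtain ⟨w, hwB, hwν⟩ := hMstB_iff.1 hm
              rw [hq] at hwν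
              have hwa : w ≠ a := fun hc => by rw [hc] at hwν; omega
              have hwC : w ∈ R.C s := by
                rw [hCB, mem_insert_erase_iff] at hwB
                rcases hwB with hc | hc
                · exact absurd hc hwa
                · exact hc.2
              exact hMstR_iff.2 ⟨w, hwC, by rw [hpb]; omega⟩
            have hmle := mst_bit_trans hmtrans
            unfold Bal at hbal ⊢
            rw [hmsR, hmsB, hmkR, hmkB]
            omega

end Stmt3Aux6
section Stmt3Aux7

variable {k T : ℕ} {σ : ℕ → S}

/-- Prefix counts agree when caches agree. -/
lemma msCnt_congr_of {Q Q' : CacheRun S k T σ} {u : ℕ}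
    (h : ∀ v, v ≤ u → Q.C v = Q'.C v) : msCnt Q u = msCnt Q' u := by
  unfold msCnt
  congr 1
  apply Finset.filter_congr
  intro v hv
  rw [Finset.mem_Icc] at hv
  rw [h (v-1) (by omega)]

lemma mkCnt_congr_of {Q Q' : CacheRun S k T σ} {u : ℕ}
    (h : ∀ v, v ≤ u → Q.C v = Q'.C v)
    (hp : ∀ v, 1 ≤ v → v ≤ u → EvictStep Q v → Q.p v = Q'.p v) :
    mkCnt Q u = mkCnt Q' u := by
  unfold mkCnt
  congr 1
  apply Finset.filter_congr
  intro v hv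
  rw [Finset.mem_Icc] at hv
  have hC : Q.C (v-1) = Q'.C (v-1) := h (v-1) (by omega)
  by_cases hE : EvictStep Q v
  · exact Mst_congr hC (hp v hv.1 hv.2 hE)
  · have hE' : ¬ EvictStep Q' v := by
      unfold EvictStep at hE ⊢
      rw [← hC]
      exact hE
    exact ⟨fun hm => absurd hm (not_Mst_of_not_evict hE),
      fun hm => absurd hm (not_Mst_of_not_evict hE')⟩

/-- Setting up the invariant at the first deviation time `t`. -/
lemma inv_start (hk : 1 ≤ k) (R A : CacheRun S k T σ) (hA : IsBelady A) {t : ℕ}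
    (ht1 : 1 ≤ t) (ht2 : t ≤ T) (hpre : ∀ s, s < t → R.C s = A.C s)
    (hdev : R.C t ≠ A.C t) :
    (hyb hk R A t).C t = A.C t ∧ InvSt R (hyb hk R A t) t := by
  obtain ⟨s0, rfl⟩ : ∃ s0, t = s0 + 1 := ⟨t - 1, by omega⟩
  have hEq : R.C s0 = A.C s0 := hpre s0 (by omega)
  set B := hyb hk R A (s0+1) with hB
  have hBpre : ∀ s, s < (s0+1) → B.C s = R.C s := hyC_pre R A ht2
  have hBs0 : B.C s0 = R.C s0 := hBpre s0 (by omega)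
  -- the step at (s0+1) must be a full-cache eviction with different victims
  have hstep := step_cases R (u := (s0+1)) ht1 ht2
  simp only [Nat.add_sub_cancel] at hstep
  rcases hstep with ⟨h, hc⟩ | ⟨hmiss, hfull, hpR, hRt⟩
  · exfalso
    apply hdev
    rw [h, A.hit (s0+1) ht1 ht2 (by simpa only [Nat.add_sub_cancel, ← hEq] using hc)]
    simp only [Nat.add_sub_cancel, hEq]
  have hmissA : σ (s0+1) ∉ A.C s0 := hEq ▸ hmiss
  have hfullA : (A.C s0).card = k := hEq ▸ hfull
  have hpA : A.p (s0+1) ∈ A.C s0 := by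
    have := A.evict_mem (s0+1) ht1 ht2 (by exact hmissA) (by exact hfullA)
    exact this
  have hAt : A.C (s0+1) = insert (σ (s0+1)) ((A.C s0).erase (A.p (s0+1))) := by
    have := A.evict (s0+1) ht1 ht2 (by exact hmissA) (by exact hfullA)
    exact this
  have hpA' : A.p (s0+1) ∈ R.C s0 := hEq ▸ hpA
  have hyz : R.p (s0+1) ≠ A.p (s0+1) := by
    intro hc
    apply hdev
    rw [hRt, hAt, hEq, hc]
  -- the hybrid's move at time (s0+1)
  have hraw : rawpol R A (s0+1) (s0+1) (B.C s0) = A.p (s0+1) := by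
    unfold rawpol
    rw [if_neg (by omega : ¬ (s0+1) < (s0+1)), if_pos rfl]
  have hq : B.p (s0+1) = A.p (s0+1) := by
    have : B.p (s0+1) = polF R A (s0+1) (s0+1) (B.C s0) := rfl
    rw [this]; unfold polF; rw [hraw, if_pos (by rw [hBs0]; exact hpA')]
  have hmissB : σ (s0+1) ∉ B.C s0 := by rw [hBs0]; exact hmiss
  have hfullB : (B.C s0).card = k := by rw [hBs0]; exact hfull
  have hBt : B.C (s0+1) = A.C (s0+1) := by
    have := B.evict (s0+1) ht1 ht2 (by simpa using hmissB) (by simpa using hfullB)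
    simp only [Nat.add_sub_cancel] at this
    rw [this, hq, hBs0, hEq, hAt]
  refine ⟨hBt, ?_⟩
  -- Belady's choice has maximal ν
  have hEA : EvictStep A (s0+1) :=
    ⟨ht1, ht2, by simpa using hmissA, by simpa using hfullA⟩
  have hmax : ∀ x ∈ A.C s0, nuOf σ T x s0 ≤ nuOf σ T (A.p (s0+1)) s0 := by
    intro x hx
    obtain ⟨hzm, hzσ⟩ := liOf_mem_lastIdx (Q := A) (s := s0) (by omega) hpA
    obtain ⟨hxm, hxσ⟩ := liOf_mem_lastIdx (Q := A) (s := s0) (by omega) hx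
    have := hA (s0+1) hEA (liOf σ (A.p (s0+1)) s0) (by simpa using hzm) (by simpa using hzσ.symm)
      (liOf σ x s0) (by simpa using hxm)
    rw [nextReq_lastIdx hxm, nextReq_lastIdx hzm, hxσ, hzσ] at this
    exact this
  have hER : EvictStep R (s0+1) :=
    ⟨ht1, ht2, by simpa using hmiss, by simpa using hfull⟩
  have hMstR_iff := Mst_iff_page hER
  simp only [Nat.add_sub_cancel] at hMstR_iff
  have hEB : EvictStep B (s0+1) :=
    ⟨ht1, ht2, by simpa using hmissB, by simpa using hfullB⟩
  have hMstB_iff := Mst_iff_page hEB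
  simp only [Nat.add_sub_cancel] at hMstB_iff
  have hnmB : ¬ Mst B (s0+1) := by
    intro hm
    obtain ⟨w, hwB, hwν⟩ := hMstB_iff.1 hm
    rw [hq] at hwν
    rw [hBs0, hEq] at hwB
    exact absurd (hmax w hwB) (by omega)
  -- prefix count equalities
  have hmsEq : msCnt B s0 = msCnt R s0 := msCnt_congr_of (fun v hv => hBpre v (by omega))
  have hmkEq : mkCnt B s0 = mkCnt R s0 := by
    apply mkCnt_congr_of (fun v hv => hBpre v (by omega))
    intro v hv1 hv2 hE
    have hCv : B.C (v-1) = R.C (v-1) := hBpre (v-1) (by omega)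
    have hER' : EvictStep R v := by
      unfold EvictStep at hE ⊢
      rw [← hCv]
      exact hE
    have hpRv : R.p v ∈ R.C (v-1) := R.evict_mem v hE.1 hE.2.1 (hCv ▸ hE.2.2.1) (hCv ▸ hE.2.2.2)
    have : B.p v = polF R A (s0+1) v (B.C (v-1)) := rfl
    rw [this]
    unfold polF
    have hrawv : rawpol R A (s0+1) v (B.C (v-1)) = R.p v := by
      unfold rawpol
      rw [if_pos (by omega : v < (s0+1))]
    rw [hrawv, if_pos (by rw [hCv]; exact hpRv)]
  have hmsRt := msCnt_succ R s0
  have hmsBt := msCnt_succ B s0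
  have hmkRt := mkCnt_succ R s0
  have hmkBt := mkCnt_succ B s0
  rw [if_pos hmiss] at hmsRt
  rw [if_pos hmissB] at hmsBt
  rw [if_neg hnmB] at hmkBt
  -- the pair (R.p (s0+1), A.p (s0+1))
  have hCBt : B.C (s0+1) = insert (R.p (s0+1)) ((R.C (s0+1)).erase (A.p (s0+1))) := by
    rw [hBt, hAt, ← hEq, hRt]
    exact ident2 hpA' hpR hyz hmiss
  have hamem : R.p (s0+1) ∉ R.C (s0+1) := by
    rw [hRt, mem_insert_erase_iff]
    rintro (hc | hc)
    · exact hmiss (hc ▸ hpR)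
    · exact hc.1 rfl
  have hbmem : A.p (s0+1) ∈ R.C (s0+1) := by
    rw [hRt, mem_insert_erase_iff]
    exact Or.inr ⟨fun hc => hyz hc.symm, hpA'⟩
  have hcardt : (R.C (s0+1)).card = k := by
    rw [hRt, card_insert_erase hmiss hpR]; exact hfull
  have hstab_y : nuOf σ T (R.p (s0+1)) (s0+1) = nuOf σ T (R.p (s0+1)) s0 :=
    nuOf_succ_ne (fun hc => hmiss (hc ▸ hpR))
  have hstab_z : nuOf σ T (A.p (s0+1)) (s0+1) = nuOf σ T (A.p (s0+1)) s0 :=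
    nuOf_succ_ne (fun hc => hmiss (hc ▸ hpA'))
  have hyle : nuOf σ T (R.p (s0+1)) s0 ≤ nuOf σ T (A.p (s0+1)) s0 := hmax _ (hEq ▸ hpR)
  refine Or.inr ⟨R.p (s0+1), A.p (s0+1), ⟨hCBt, hamem, hbmem, hcardt⟩, ?_⟩
  rcases lt_or_eq_of_le hyle with hlt | heq
  · -- strict: G-type with a mistake of R at (s0+1)
    have hmR : Mst R (s0+1) := hMstR_iff.2 ⟨A.p (s0+1), hpA', hlt⟩
    rw [if_pos hmR] at hmkRt
    refine Or.inl ⟨by rw [hstab_y, hstab_z]; exact hlt, ?_⟩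
    unfold Bal
    rw [hmsRt, hmsBt, hmkRt, hmkBt, hmsEq, hmkEq]
    omega
  · -- equal: B-type
    refine Or.inr ⟨by rw [hstab_y, hstab_z]; omega, ?_⟩
    unfold Bal
    rw [hmsRt, hmsBt, hmkRt, hmkBt, hmsEq, hmkEq]
    have := mst_bit_le R (s0+1)
    omega

/-- Main bound: `misses R ≤ misses A + mistakes R` by induction on the deviation time. -/
lemma main_bound (hk : 1 ≤ k) (A : CacheRun S k T σ) (hA : IsBelady A) :
    ∀ fuel, ∀ R : CacheRun S k T σ, (∀ s, s + fuel ≤ T → R.C s = A.C s) →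
      msCnt R T ≤ msCnt A T + mkCnt R T := by
  intro fuel
  induction fuel with
  | zero =>
    intro R hag
    have : msCnt R T = msCnt A T :=
      msCnt_congr_of (fun v hv => hag v (by omega))
    omega
  | succ f ih =>
    intro R hag
    by_cases hall : ∀ s, s ≤ T → R.C s = A.C s
    · have : msCnt R T = msCnt A T := msCnt_congr_of (fun v hv => hall v hv)
      omega
    · push_neg at hall
      have hex : ∃ s, s ≤ T ∧ R.C s ≠ A.C s := hall
      classical
      obtain ⟨t, ht2, hdev, hpre⟩ :
          ∃ t, t ≤ T ∧ R.C t ≠ A.C t ∧ ∀ s, s < t → R.C s = A.C s := by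
        refine ⟨Nat.find hex, (Nat.find_spec hex).1, (Nat.find_spec hex).2, ?_⟩
        intro s hst
        by_contra hc
        have hT := (Nat.find_spec hex).1
        exact Nat.find_min hex hst ⟨by omega, hc⟩
      have ht1 : 1 ≤ t := by
        rcases Nat.eq_zero_or_pos t with h0 | h0
        · exfalso; apply hdev; rw [h0, R.init, A.init]
        · exact h0
      have htf : T ≤ t + f := by
        by_contra hc
        exact hdev (hag t (by omega))
      set B := hyb hk R A t with hB
      obtain ⟨hBt, hinv0⟩ := inv_start hk R A hA ht1 ht2 hpre hdev
      have hBpre : ∀ s, s < t → B.C s = R.C s := hyC_pre R A ht2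
      -- propagate the invariant to time T
      have hinvT : ∀ m, t + m ≤ T → InvSt R B (t + m) := by
        intro m
        induction m with
        | zero => intro _; exact hinv0
        | succ n ihn =>
          intro hmT
          have : t + n + 1 = t + (n + 1) := by omega
          rw [← this]
          exact inv_step hk R A t (by omega) (by omega) (ihn (by omega))
      have hinvT' : InvSt R B T := by
        have := hinvT (T - t) (by omega)
        rwa [Nat.add_sub_cancel' ht2] at this
      have hbalT : msCnt R T + mkCnt B T ≤ msCnt B T + mkCnt R T := by
        rcases hinvT' with ⟨_, hbal⟩ | ⟨a, b, _, ⟨_, hbal⟩ | ⟨_, hbal⟩⟩ <;>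
          · unfold Bal at hbal; omega
      have hih : msCnt B T ≤ msCnt A T + mkCnt B T := by
        apply ih
        intro s hs
        rcases Nat.lt_or_ge s t with hst | hst
        · rw [hBpre s hst]
          exact hpre s hst
        · have : s = t := by omega
          rw [this, hBt]
      omega

end Stmt3Aux7
section Stmt3Aux8

variable {k T : ℕ} {σ : ℕ → S}

/-- A page stays out of the cache while it is not requested. -/
lemma not_mem_C_of_no_req (Q : CacheRun S k T σ) {x : S} {v1 v2 : ℕ} (h1 : x ∉ Q.C v1)
    (hv : v1 ≤ v2) (hT : v2 ≤ T) (hno : ∀ w, v1 < w → w ≤ v2 → σ w ≠ x) : x ∉ Q.C v2 := by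
  induction v2 with
  | zero => have : v1 = 0 := by omega
            rwa [this] at h1
  | succ n ihn =>
    rcases Nat.lt_or_ge v1 (n+1) with hlt | hge
    · have hn : x ∉ Q.C n := ihn (by omega) (by omega)
        (fun w hw1 hw2 => hno w hw1 (by omega))
      intro hc
      have hsub := C_subset_insert Q (u := n+1) (by omega) hT
      simp only [Nat.add_sub_cancel] at hsub
      rcases Finset.mem_insert.1 (hsub hc) with h | h
      · exact hno (n+1) (by omega) (le_refl _) h.symm
      · exact hn h
    · have : v1 = n + 1 := by omega
      rwa [this] at h1
  termination_by v2

/-- The evicted index of a mistake. -/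
noncomputable def mstEvj (R : CacheRun S k T σ) (u : ℕ) : ℕ :=
  if h : Mst R u then h.choose else 0

noncomputable def mstWit (R : CacheRun S k T σ) (u : ℕ) : ℕ :=
  if h : Mst R u then h.choose_spec.2.choose else 0

lemma mst_spec {R : CacheRun S k T σ} {u : ℕ} (h : Mst R u) :
    EvictsIdx R u (mstEvj R u) ∧ mstWit R u ∈ lastIdx R (u-1) ∧
      nextReq σ T (mstEvj R u) < nextReq σ T (mstWit R u) := by
  rw [mstEvj, mstWit, dif_pos h, dif_pos h]
  obtain ⟨h1, h2⟩ := h.choose_spec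
  obtain ⟨h3, h4⟩ := h2.choose_spec
  exact ⟨h1, h3, h4⟩

/-- The evicted index determines the eviction time. -/
lemma evj_inj {R : CacheRun S k T σ} {u1 u2 j : ℕ} (h1 : EvictsIdx R u1 j)
    (h2 : EvictsIdx R u2 j) : u1 = u2 := by
  by_contra hne
  wlog hlt : u1 < u2 generalizing u1 u2
  · exact this h2 h1 (fun hc => hne hc.symm) (by omega)
  obtain ⟨⟨hE1a, hE1b, hE1c, hE1d⟩, hj1, hp1⟩ := h1
  obtain ⟨⟨hE2a, hE2b, hE2c, hE2d⟩, hj2, hp2⟩ := h2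
  obtain ⟨hj1i, hj1u, hj1mem, hj1no⟩ := mem_lastIdx_iff.1 hj1
  obtain ⟨hj2i, hj2u, hj2mem, hj2no⟩ := mem_lastIdx_iff.1 hj2
  -- the page σ j is evicted at u1, hence not in the cache at u1
  have hout : σ j ∉ R.C u1 := by
    have hCu1 : R.C u1 = insert (σ u1) ((R.C (u1-1)).erase (R.p u1)) :=
      R.evict u1 hE1a hE1b hE1c hE1d
    rw [hCu1, mem_insert_erase_iff, hp1]
    rintro (hc | hc)
    · exact hE1c (hc ▸ hj1mem)
    · exact hc.1 rfl
  -- and never requested in (j, u2-1], so it cannot be cached at u2-1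
  have : σ j ∉ R.C (u2 - 1) :=
    not_mem_C_of_no_req R hout (by omega) (by omega)
      (fun w hw1 hw2 => hj2no w (by omega) (by omega))
  exact this hj2mem

/-- The eviction graph of all mistakes of a run. -/
noncomputable def mstGraph (R : CacheRun S k T σ) : EvictionGraph R where
  E := ((Finset.Icc 1 T).filter (Mst R)).image (fun u => (mstWit R u, mstEvj R u))
  time := fun e => if h : ∃ u, (u ∈ (Finset.Icc 1 T).filter (Mst R) ∧
      (mstWit R u, mstEvj R u) = e) then h.choose else 0
  time_inj := by
    intro e he e' he' htime
    have key : ∀ x ∈ ((Finset.Icc 1 T).filter (Mst R)).image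
        (fun u => (mstWit R u, mstEvj R u)),
        ∃ h : ∃ u, (u ∈ (Finset.Icc 1 T).filter (Mst R) ∧ (mstWit R u, mstEvj R u) = x),
          True := by
      intro x hx
      obtain ⟨u, hu, hux⟩ := Finset.mem_image.1 hx
      exact ⟨⟨u, hu, hux⟩, trivial⟩
    obtain ⟨hex, -⟩ := key e he
    obtain ⟨hex', -⟩ := key e' he'
    have h1 := hex.choose_spec
    have h2 := hex'.choose_spec
    simp only [dif_pos hex, dif_pos hex'] at htime
    rw [← h1.2, ← h2.2, htime]
  mistake := by
    intro e he
    obtain ⟨u, hu, hux⟩ := Finset.mem_image.1 he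
    have hex : ∃ u, (u ∈ (Finset.Icc 1 T).filter (Mst R) ∧ (mstWit R u, mstEvj R u) = e) :=
      ⟨u, hu, hux⟩
    have hspec := hex.choose_spec
    set u0 := hex.choose with hu0
    have htime : (fun e => if h : ∃ u, (u ∈ (Finset.Icc 1 T).filter (Mst R) ∧
        (mstWit R u, mstEvj R u) = e) then h.choose else 0) e = u0 := by
      simp only [dif_pos hex]
      exact hu0.symm
    beta_reduce at htime
    rw [htime]
    have hm : Mst R u0 := (Finset.mem_filter.1 hspec.1).2
    obtain ⟨hEv, hW, hlt⟩ := mst_spec hm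
    have he1 : e.1 = mstWit R u0 := by rw [← hspec.2]
    have he2 : e.2 = mstEvj R u0 := by rw [← hspec.2]
    rw [he1, he2]
    exact ⟨hEv, hW, hlt⟩

lemma mstGraph_card (R : CacheRun S k T σ) :
    (mstGraph R).E.card = mkCnt R T := by
  unfold mstGraph mkCnt
  simp only
  apply Finset.card_image_of_injOn
  intro u1 hu1 u2 hu2 heq
  have hm1 : Mst R u1 := (Finset.mem_filter.1 hu1).2
  have hm2 : Mst R u2 := (Finset.mem_filter.1 hu2).2
  have h1 := (mst_spec hm1).1
  have h2 := (mst_spec hm2).1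
  have : mstEvj R u1 = mstEvj R u2 := congrArg Prod.snd heq
  exact evj_inj h1 (this ▸ h2)

end Stmt3Aux8
/-- For any run of a feasible eviction strategy there is an eviction
graph `H` with `OBJ_Q ≤ OPT + |E(H)|`. -/
theorem stmt3 {S : Type} [DecidableEq S] (k T : ℕ) (hk : 1 ≤ k) (σ : ℕ → S)
    (R A : CacheRun S k T σ) (hA : IsBelady A) :
    ∃ H : EvictionGraph R, misses R ≤ misses A + H.E.card := by
  refine ⟨mstGraph R, ?_⟩
  rw [misses_eq_msCnt, misses_eq_msCnt, mstGraph_card]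
  exact main_bound hk A hA (T + 1) R (fun s hs => by omega)

end Caching
end

section
/- Let B be the BlindOracle strategy. Then OBJ_B ≤ OPT + η, where η = Σ_{t=1}^T |ν(t) − ω(t)| is the total prediction loss. In particular, the competitive ratio of BlindOracle is at most 1 + η/OPT. -/
namespace Caching

attribute [local instance low] Classical.propDecidable

variable {S : Type} [DecidableEq S]

section Basics
variable {S : Type} [DecidableEq S] {k T : ℕ} {σ : ℕ → S}

lemma nextReq_gt' (t : ℕ) : t < nextReq σ T t ∨ nextReq σ T t = T + 1 := by
  unfold nextReq; split
  · next h => exact Or.inl (Nat.find_spec h).1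
  · exact Or.inr rfl

lemma nextReq_le (t : ℕ) : nextReq σ T t ≤ T + 1 := by
  unfold nextReq; split
  · next h => have := (Nat.find_spec h).2.1; omega
  · exact le_refl _

lemma nextReq_gt {t : ℕ} (ht : t ≤ T) : t < nextReq σ T t := by
  rcases nextReq_gt' (σ := σ) (T := T) t with h | h <;> omega

lemma nextReq_le_of {t s : ℕ} (h1 : t < s) (h2 : s ≤ T) (h3 : σ s = σ t) :
    nextReq σ T t ≤ s := by
  have hex : ∃ s', t < s' ∧ s' ≤ T ∧ σ s' = σ t := ⟨s, h1, h2, h3⟩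
  simp only [nextReq, dif_pos hex]
  exact Nat.find_min' hex ⟨h1, h2, h3⟩

lemma sigma_nextReq {t : ℕ} (h : nextReq σ T t ≤ T) : σ (nextReq σ T t) = σ t := by
  by_cases hex : ∃ s, t < s ∧ s ≤ T ∧ σ s = σ t
  · simp only [nextReq, dif_pos hex]
    exact (Nat.find_spec hex).2.2
  · simp only [nextReq, dif_neg hex] at h; omega

lemma nextReq_min {t s : ℕ} (h1 : t < s) (h3 : s < nextReq σ T t) (h2 : s ≤ T) :
    σ s ≠ σ t := fun heq => by have := nextReq_le_of h1 h2 heq; omega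

lemma nextReq_inj {a b : ℕ} (ha : nextReq σ T a ≤ T) (h : nextReq σ T a = nextReq σ T b) :
    a = b := by
  have hb : nextReq σ T b ≤ T := h ▸ ha
  have hsa : σ (nextReq σ T a) = σ a := sigma_nextReq ha
  have hsb : σ (nextReq σ T b) = σ b := sigma_nextReq hb
  have hga : a < nextReq σ T a := by rcases nextReq_gt' (σ := σ) (T := T) a with h' | h' <;> omega
  have hgb : b < nextReq σ T b := by rcases nextReq_gt' (σ := σ) (T := T) b with h' | h' <;> omega
  rcases lt_trichotomy a b with hlt | he | hlt
  · exfalso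
    have hba : σ b = σ a := by rw [← hsb, ← h]; exact hsa
    have hbT : b ≤ T := by omega
    have := nextReq_le_of hlt hbT hba
    omega
  · exact he
  · exfalso
    have hab : σ a = σ b := by rw [← hsa, h]; exact hsb
    have haT : a ≤ T := by omega
    have := nextReq_le_of hlt haT hab
    omega

lemma mem_lastIdx {R : CacheRun S k T σ} {t i : ℕ} :
    i ∈ lastIdx R t ↔ (1 ≤ i ∧ i ≤ t) ∧ σ i ∈ R.C t ∧
      ∀ j ∈ Finset.Icc (i + 1) t, σ j ≠ σ i := by
  simp [lastIdx, Finset.mem_filter, Finset.mem_Icc, and_assoc]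

lemma lastIdx_nu_gt {R : CacheRun S k T σ} {t i : ℕ} (ht : t ≤ T) (hi : i ∈ lastIdx R t) :
    t < nextReq σ T i := by
  rw [mem_lastIdx] at hi
  by_contra hle
  push_neg at hle
  rcases nextReq_gt' (σ := σ) (T := T) i with h' | h'
  · exact hi.2.2 _ (Finset.mem_Icc.2 ⟨h', hle⟩) (sigma_nextReq (le_trans hle ht))
  · omega

lemma lastIdx_unique {R : CacheRun S k T σ} {t i i' : ℕ} (hi : i ∈ lastIdx R t)
    (hi' : i' ∈ lastIdx R t) (hσ : σ i = σ i') : i = i' := by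
  rw [mem_lastIdx] at hi hi'
  rcases lt_trichotomy i i' with hlt | he | hlt
  · exact absurd hσ.symm (hi.2.2 _ (Finset.mem_Icc.2 ⟨by omega, hi'.1.2⟩))
  · exact he
  · exact absurd hσ (hi'.2.2 _ (Finset.mem_Icc.2 ⟨by omega, hi.1.2⟩))

lemma C_cases {R : CacheRun S k T σ} {t : ℕ} (h1 : 1 ≤ t) (h2 : t ≤ T) :
    R.C t = insert (σ t) (R.C (t-1)) ∨
    (σ t ∉ R.C (t-1) ∧ (R.C (t-1)).card = k ∧ R.p t ∈ R.C (t-1) ∧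
      R.C t = insert (σ t) ((R.C (t-1)).erase (R.p t))) := by
  by_cases hm : σ t ∈ R.C (t-1) ∨ (R.C (t-1)).card < k
  · exact Or.inl (R.hit t h1 h2 hm)
  · push_neg at hm
    have hk : (R.C (t-1)).card = k := le_antisymm (R.card_le _) hm.2
    exact Or.inr ⟨hm.1, hk, R.evict_mem t h1 h2 hm.1 hk, R.evict t h1 h2 hm.1 hk⟩

lemma C_subset_step {R : CacheRun S k T σ} {t : ℕ} (h1 : 1 ≤ t) (h2 : t ≤ T) :
    R.C t ⊆ insert (σ t) (R.C (t-1)) := by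
  rcases C_cases (R := R) h1 h2 with h | ⟨_, _, _, h⟩
  · rw [h]
  · rw [h]
    exact Finset.insert_subset_insert _ (Finset.erase_subset _ _)

lemma sigma_mem_C {R : CacheRun S k T σ} {t : ℕ} (h1 : 1 ≤ t) (h2 : t ≤ T) :
    σ t ∈ R.C t := by
  rcases C_cases (R := R) h1 h2 with h | ⟨_, _, _, h⟩ <;> rw [h] <;>
    exact Finset.mem_insert_self _ _

lemma exists_rep {R : CacheRun S k T σ} :
    ∀ t, t ≤ T → ∀ pg ∈ R.C t, ∃ i ∈ lastIdx R t, σ i = pg := by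
  intro t
  induction t with
  | zero => intro _ pg hpg; rw [R.init] at hpg; exact absurd hpg (Finset.notMem_empty _)
  | succ n ih =>
    intro ht pg hpg
    by_cases hpg' : pg = σ (n+1)
    · refine ⟨n+1, mem_lastIdx.2 ⟨⟨by omega, le_refl _⟩, ?_, ?_⟩, hpg'.symm⟩
      · exact sigma_mem_C (by omega) ht
      · intro j hj; rw [Finset.mem_Icc] at hj; omega
    · have hsub := C_subset_step (R := R) (t := n+1) (by omega) ht
      have : pg ∈ R.C n := by
        have := hsub hpg
        rcases Finset.mem_insert.1 this with h | h
        · exact absurd h hpg'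
        · simpa using h
      obtain ⟨i, hi, hσi⟩ := ih (by omega) pg this
      rw [mem_lastIdx] at hi
      refine ⟨i, mem_lastIdx.2 ⟨⟨hi.1.1, by omega⟩, by rw [hσi]; exact hpg, ?_⟩, hσi⟩
      intro j hj
      rw [Finset.mem_Icc] at hj
      rcases Nat.lt_succ_iff_lt_or_eq.1 (Nat.lt_succ_of_le hj.2) with h | h
      · exact hi.2.2 _ (Finset.mem_Icc.2 ⟨hj.1, by omega⟩)
      · rw [h, hσi]; exact fun he => hpg' he.symm

end Basics
section Dynamics
variable {S : Type} [DecidableEq S] {k T : ℕ} {σ : ℕ → S}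

lemma lastIdx_zero (R : CacheRun S k T σ) : lastIdx R 0 = ∅ := by
  simp [lastIdx]

lemma notMem_lastIdx_gt {R : CacheRun S k T σ} {t i : ℕ} (h : t < i) : i ∉ lastIdx R t := by
  rw [mem_lastIdx]; omega

lemma last_eq {R R' : CacheRun S k T σ} {t i i' : ℕ} (hi : i ∈ lastIdx R t)
    (hi' : i' ∈ lastIdx R' t) (hσ : σ i = σ i') : i = i' := by
  rw [mem_lastIdx] at hi hi'
  rcases lt_trichotomy i i' with hlt | he | hlt
  · exact absurd hσ.symm (hi.2.2 _ (Finset.mem_Icc.2 ⟨by omega, hi'.1.2⟩))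
  · exact he
  · exact absurd hσ (hi'.2.2 _ (Finset.mem_Icc.2 ⟨by omega, hi.1.2⟩))

lemma self_mem_lastIdx {R : CacheRun S k T σ} {t : ℕ} (h1 : 1 ≤ t) (h2 : t ≤ T) :
    t ∈ lastIdx R t := by
  refine mem_lastIdx.2 ⟨⟨h1, le_refl _⟩, sigma_mem_C h1 h2, ?_⟩
  intro j hj; rw [Finset.mem_Icc] at hj; omega

/-- J-update on a hit. -/
lemma J_hit {R : CacheRun S k T σ} {t : ℕ} (h1 : 1 ≤ t) (h2 : t ≤ T)
    (hm : σ t ∈ R.C (t-1)) :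
    ∃ x0 ∈ lastIdx R (t-1), σ x0 = σ t ∧ nextReq σ T x0 = t ∧
      lastIdx R t = insert t ((lastIdx R (t-1)).erase x0) := by
  obtain ⟨x0, hx0, hσ0⟩ := exists_rep (R := R) (t-1) (by omega) _ hm
  have hCt : R.C t = R.C (t-1) := by
    rw [R.hit t h1 h2 (Or.inl hm), Finset.insert_eq_self.2 hm]
  have hb := mem_lastIdx.1 hx0
  have hν : nextReq σ T x0 = t := by
    have hgt : t - 1 < nextReq σ T x0 := lastIdx_nu_gt (by omega) hx0
    have hle : nextReq σ T x0 ≤ t := nextReq_le_of (by omega) h2 hσ0.symm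
    omega
  refine ⟨x0, hx0, hσ0, hν, ?_⟩
  ext i
  simp only [Finset.mem_insert, Finset.mem_erase]
  constructor
  · intro hi
    have hib := mem_lastIdx.1 hi
    by_cases hit : i = t
    · exact Or.inl hit
    · refine Or.inr ⟨?_, mem_lastIdx.2 ⟨⟨hib.1.1, by omega⟩, by rw [← hCt]; exact hib.2.1, ?_⟩⟩
      · rintro rfl
        exact hib.2.2 t (Finset.mem_Icc.2 ⟨by omega, le_refl _⟩) hσ0.symm
      · intro j hj; rw [Finset.mem_Icc] at hj
        exact hib.2.2 j (Finset.mem_Icc.2 ⟨hj.1, by omega⟩)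
  · rintro (rfl | ⟨hne, hi⟩)
    · exact self_mem_lastIdx h1 h2
    · have hib := mem_lastIdx.1 hi
      refine mem_lastIdx.2 ⟨⟨hib.1.1, by omega⟩, by rw [hCt]; exact hib.2.1, ?_⟩
      intro j hj; rw [Finset.mem_Icc] at hj
      rcases Nat.lt_or_ge j t with hjt | hjt
      · exact hib.2.2 j (Finset.mem_Icc.2 ⟨hj.1, by omega⟩)
      · have : j = t := by omega
        subst this
        intro he
        exact hne (last_eq hi hx0 (hσ0.trans he).symm)
  
/-- J-update on a miss with non-full cache. -/
lemma J_missNF {R : CacheRun S k T σ} {t : ℕ} (h1 : 1 ≤ t) (h2 : t ≤ T)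
    (hm : σ t ∉ R.C (t-1)) (hc : (R.C (t-1)).card < k) :
    lastIdx R t = insert t (lastIdx R (t-1)) := by
  have hCt : R.C t = insert (σ t) (R.C (t-1)) := R.hit t h1 h2 (Or.inr hc)
  ext i
  simp only [Finset.mem_insert]
  constructor
  · intro hi
    have hib := mem_lastIdx.1 hi
    by_cases hit : i = t
    · exact Or.inl hit
    · have hσi : σ i ≠ σ t := fun he =>
        hib.2.2 t (Finset.mem_Icc.2 ⟨by omega, le_refl _⟩) he.symm
      have : σ i ∈ R.C (t-1) := by
        rcases Finset.mem_insert.1 (hCt ▸ hib.2.1) with h | h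
        · exact absurd h hσi
        · exact h
      refine Or.inr (mem_lastIdx.2 ⟨⟨hib.1.1, by omega⟩, this, ?_⟩)
      intro j hj; rw [Finset.mem_Icc] at hj
      exact hib.2.2 j (Finset.mem_Icc.2 ⟨hj.1, by omega⟩)
  · rintro (rfl | hi)
    · exact self_mem_lastIdx h1 h2
    · have hib := mem_lastIdx.1 hi
      refine mem_lastIdx.2 ⟨⟨hib.1.1, by omega⟩, by rw [hCt]; exact Finset.mem_insert_of_mem hib.2.1, ?_⟩
      intro j hj; rw [Finset.mem_Icc] at hj
      rcases Nat.lt_or_ge j t with hjt | hjt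
      · exact hib.2.2 j (Finset.mem_Icc.2 ⟨hj.1, by omega⟩)
      · have : j = t := by omega
        subst this
        intro he
        exact hm (by rw [he]; exact hib.2.1)

/-- J-update on a full-cache miss. -/
lemma J_missF {R : CacheRun S k T σ} {t : ℕ} (h1 : 1 ≤ t) (h2 : t ≤ T)
    (hm : σ t ∉ R.C (t-1)) (hc : (R.C (t-1)).card = k) :
    ∃ e ∈ lastIdx R (t-1), σ e = R.p t ∧
      lastIdx R t = insert t ((lastIdx R (t-1)).erase e) := by
  have hpm := R.evict_mem t h1 h2 hm hc
  obtain ⟨e, he, hσe⟩ := exists_rep (R := R) (t-1) (by omega) _ hpm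
  have hCt : R.C t = insert (σ t) ((R.C (t-1)).erase (R.p t)) := R.evict t h1 h2 hm hc
  refine ⟨e, he, hσe, ?_⟩
  ext i
  simp only [Finset.mem_insert, Finset.mem_erase]
  constructor
  · intro hi
    have hib := mem_lastIdx.1 hi
    by_cases hit : i = t
    · exact Or.inl hit
    · have hσi : σ i ≠ σ t := fun heq =>
        hib.2.2 t (Finset.mem_Icc.2 ⟨by omega, le_refl _⟩) heq.symm
      have hmem : σ i ∈ (R.C (t-1)).erase (R.p t) := by
        rcases Finset.mem_insert.1 (hCt ▸ hib.2.1) with h | h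
        · exact absurd h hσi
        · exact h
      have h1' : σ i ≠ R.p t := (Finset.mem_erase.1 hmem).1
      have h2' : σ i ∈ R.C (t-1) := (Finset.mem_erase.1 hmem).2
      have hilast : i ∈ lastIdx R (t-1) := by
        refine mem_lastIdx.2 ⟨⟨hib.1.1, by omega⟩, h2', ?_⟩
        intro j hj; rw [Finset.mem_Icc] at hj
        exact hib.2.2 j (Finset.mem_Icc.2 ⟨hj.1, by omega⟩)
      exact Or.inr ⟨fun hie => h1' (by rw [hie, hσe]), hilast⟩
  · rintro (rfl | ⟨hne, hi⟩)
    · exact self_mem_lastIdx h1 h2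
    · have hib := mem_lastIdx.1 hi
      have hσne : σ i ≠ R.p t := fun heq => hne (last_eq hi he (by rw [heq, hσe]))
      refine mem_lastIdx.2 ⟨⟨hib.1.1, by omega⟩, ?_, ?_⟩
      · rw [hCt]
        exact Finset.mem_insert_of_mem (Finset.mem_erase.2 ⟨hσne, hib.2.1⟩)
      · intro j hj; rw [Finset.mem_Icc] at hj
        rcases Nat.lt_or_ge j t with hjt | hjt
        · exact hib.2.2 j (Finset.mem_Icc.2 ⟨hj.1, by omega⟩)
        · have : j = t := by omega
          subst this
          intro heq
          exact hm (by rw [heq]; exact hib.2.1)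

lemma card_lastIdx {R : CacheRun S k T σ} {t : ℕ} (ht : t ≤ T) :
    (lastIdx R t).card = (R.C t).card := by
  refine Finset.card_bij (fun i _ => σ i) ?_ ?_ ?_
  · intro a ha; exact (mem_lastIdx.1 ha).2.1
  · intro a ha b hb h; exact last_eq ha hb h
  · intro pg hpg
    obtain ⟨i, hi, hσi⟩ := exists_rep (R := R) t ht pg hpg
    exact ⟨i, hi, hσi⟩

lemma cards_eq (A B : CacheRun S k T σ) :
    ∀ t, t ≤ T → (A.C t).card = (B.C t).card ∧ ((A.C t).card < k → A.C t = B.C t) := by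
  intro t
  induction t with
  | zero => intro _; rw [A.init, B.init]; simp
  | succ n ih =>
    intro ht
    obtain ⟨hcard, heq⟩ := ih (by omega)
    have h1 : (1:ℕ) ≤ n + 1 := by omega
    have hsub : n + 1 - 1 = n := by omega
    by_cases hfull : (A.C n).card < k
    · have hAB : A.C n = B.C n := heq hfull
      have hA : A.C (n+1) = insert (σ (n+1)) (A.C n) := by
        apply A.hit (n+1) h1 ht; rw [hsub]
        by_cases hm : σ (n+1) ∈ A.C n
        · exact Or.inl hm
        · exact Or.inr hfull
      have hB : B.C (n+1) = insert (σ (n+1)) (B.C n) := by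
        apply B.hit (n+1) h1 ht; rw [hsub]
        rw [← hAB]
        by_cases hm : σ (n+1) ∈ A.C n
        · exact Or.inl hm
        · exact Or.inr (by omega)
      rw [hA, hB, hAB]
      exact ⟨rfl, fun _ => rfl⟩
    · have hckA : (A.C n).card = k := le_antisymm (A.card_le n) (by omega)
      have hckB : (B.C n).card = k := by omega
      have hstep : ∀ (R : CacheRun S k T σ), (R.C n).card = k → (R.C (n+1)).card = k := by
        intro R hck
        rcases C_cases (R := R) (t := n+1) h1 ht with h | ⟨hm, _, hp, h⟩
        · rw [hsub] at h
          refine le_antisymm (R.card_le _) ?_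
          calc k = (R.C n).card := hck.symm
            _ ≤ (R.C (n+1)).card := Finset.card_le_card (by rw [h]; exact Finset.subset_insert _ _)
        · rw [hsub] at h hm hp
          have hpos : 0 < (R.C n).card := Finset.card_pos.2 ⟨_, hp⟩
          rw [h, Finset.card_insert_of_notMem (fun hx => hm (Finset.erase_subset _ _ hx)),
            Finset.card_erase_of_mem hp, hck]
          omega
      have hA := hstep A hckA
      have hB := hstep B hckB
      rw [hA, hB]
      exact ⟨rfl, fun hlt => absurd hlt (by omega)⟩

end Dynamics
section Defs
variable {S : Type} [DecidableEq S] {k T : ℕ} {σ : ℕ → S}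

lemma lastIdx_congr_s4 {A B : CacheRun S k T σ} {t : ℕ} (h : A.C t = B.C t) :
    lastIdx A t = lastIdx B t := by
  unfold lastIdx; rw [h]

/-- Classification of the joint step. -/
lemma joint_cases (A B : CacheRun S k T σ) {t : ℕ} (h1 : 1 ≤ t) (h2 : t ≤ T) :
    (σ t ∈ A.C (t-1) ∧ σ t ∈ B.C (t-1)) ∨
    (σ t ∉ A.C (t-1) ∧ σ t ∉ B.C (t-1) ∧ lastIdx A (t-1) = lastIdx B (t-1) ∧
      (A.C (t-1)).card < k ∧ (B.C (t-1)).card < k) ∨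
    (σ t ∈ A.C (t-1) ∧ σ t ∉ B.C (t-1) ∧ (B.C (t-1)).card = k) ∨
    (σ t ∉ A.C (t-1) ∧ σ t ∈ B.C (t-1) ∧ (A.C (t-1)).card = k) ∨
    (σ t ∉ A.C (t-1) ∧ σ t ∉ B.C (t-1) ∧ (A.C (t-1)).card = k ∧ (B.C (t-1)).card = k) := by
  obtain ⟨hcard, heq⟩ := cards_eq A B (t-1) (by omega)
  by_cases hA : σ t ∈ A.C (t-1) <;> by_cases hB : σ t ∈ B.C (t-1)
  · exact Or.inl ⟨hA, hB⟩
  · refine Or.inr (Or.inr (Or.inl ⟨hA, hB, ?_⟩))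
    by_contra hc
    have hlt : (B.C (t-1)).card < k := lt_of_le_of_ne (B.card_le _) hc
    exact hB ((heq (by omega)) ▸ hA)
  · refine Or.inr (Or.inr (Or.inr (Or.inl ⟨hA, hB, ?_⟩)))
    by_contra hc
    have hlt : (A.C (t-1)).card < k := lt_of_le_of_ne (A.card_le _) hc
    exact hA ((heq hlt).symm ▸ hB)
  · by_cases hfull : (A.C (t-1)).card < k
    · exact Or.inr (Or.inl ⟨hA, hB, lastIdx_congr_s4 (heq hfull), hfull, by omega⟩)
    · have : (A.C (t-1)).card = k := le_antisymm (A.card_le _) (by omega)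
      exact Or.inr (Or.inr (Or.inr (Or.inr ⟨hA, hB, this, by omega⟩)))

/-- Matching invariant data. -/
def OkM (A B : CacheRun S k T σ) (t : ℕ) (m : Finset (ℕ × ℕ)) : Prop :=
  (∀ q ∈ m, q.1 ∈ lastIdx A t \ lastIdx B t ∧ nextReq σ T q.1 ≤ T ∧
     q.2 ∈ lastIdx B t \ lastIdx A t ∧ nextReq σ T q.2 < nextReq σ T q.1) ∧
  (∀ q ∈ m, ∀ r ∈ m, q.1 = r.1 → q = r) ∧
  (∀ q ∈ m, ∀ r ∈ m, q.2 = r.2 → q = r)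

noncomputable def UU (A B : CacheRun S k T σ) (t : ℕ) (m : Finset (ℕ × ℕ)) : Finset ℕ :=
  (lastIdx A t \ lastIdx B t).filter fun x => nextReq σ T x ≤ T ∧ x ∉ m.image Prod.fst

noncomputable def missCnt (R : CacheRun S k T σ) (t : ℕ) : ℕ :=
  ((Finset.Icc 1 t).filter fun s => σ s ∉ R.C (s-1)).card

def MistakeAt (B : CacheRun S k T σ) (t : ℕ) : Prop :=
  σ t ∉ B.C (t-1) ∧ (B.C (t-1)).card = k ∧
  ∃ e ∈ lastIdx B (t-1), σ e = B.p t ∧ ∃ z ∈ lastIdx B (t-1), nextReq σ T e < nextReq σ T z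

noncomputable def mistCnt (B : CacheRun S k T σ) (t : ℕ) : ℕ :=
  ((Finset.Icc 1 t).filter (MistakeAt B)).card

lemma cnt_step (P : ℕ → Prop) [DecidablePred P] {t : ℕ} (h : 1 ≤ t) :
    ((Finset.Icc 1 t).filter P).card
      = ((Finset.Icc 1 (t-1)).filter P).card + (if P t then 1 else 0) := by
  have hins : Finset.Icc 1 t = insert t (Finset.Icc 1 (t-1)) := by
    ext i; simp only [Finset.mem_Icc, Finset.mem_insert]; omega
  have hnm : t ∉ (Finset.Icc 1 (t-1)).filter P := by
    intro hc
    have := (Finset.mem_filter.1 hc).1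
    rw [Finset.mem_Icc] at this; omega
  rw [hins, Finset.filter_insert]
  split
  · rw [Finset.card_insert_of_notMem hnm]
  · simp

lemma missCnt_step (R : CacheRun S k T σ) {t : ℕ} (h : 1 ≤ t) :
    missCnt R t = missCnt R (t-1) + (if σ t ∉ R.C (t-1) then 1 else 0) := by
  unfold missCnt; exact cnt_step _ h

lemma mistCnt_step (B : CacheRun S k T σ) {t : ℕ} (h : 1 ≤ t) :
    mistCnt B t = mistCnt B (t-1) + (if MistakeAt B t then 1 else 0) := by
  unfold mistCnt; exact cnt_step _ h

lemma D_card_eq (A B : CacheRun S k T σ) {t : ℕ} (ht : t ≤ T) :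
    (lastIdx A t \ lastIdx B t).card = (lastIdx B t \ lastIdx A t).card := by
  have h1 : (lastIdx A t).card = (lastIdx B t).card := by
    rw [card_lastIdx ht, card_lastIdx ht, (cards_eq A B t ht).1]
  have h2 := Finset.card_sdiff_add_card_inter (lastIdx A t) (lastIdx B t)
  have h3 := Finset.card_sdiff_add_card_inter (lastIdx B t) (lastIdx A t)
  rw [Finset.inter_comm] at h3
  omega

lemma fresh_partner {m : Finset (ℕ × ℕ)} {Dn Dn' : Finset ℕ}
    (hmem : ∀ q ∈ m, q.1 ∈ Dn ∧ q.2 ∈ Dn')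
    (hinj : ∀ q ∈ m, ∀ r ∈ m, q.1 = r.1 → q = r)
    (hcard : Dn.card = Dn'.card) {x : ℕ} (hx : x ∈ Dn) (hxm : x ∉ m.image Prod.fst) :
    ∃ y ∈ Dn', y ∉ m.image Prod.snd := by
  by_contra hc
  push_neg at hc
  have hsub : Dn' ⊆ m.image Prod.snd := fun y hy => hc y hy
  have h1 : Dn'.card ≤ (m.image Prod.snd).card := Finset.card_le_card hsub
  have h2 : (m.image Prod.snd).card ≤ m.card := Finset.card_image_le
  have h3 : m.card = (m.image Prod.fst).card :=
    (Finset.card_image_of_injOn fun q hq r hr h => hinj q hq r hr h).symm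
  have h4 : m.image Prod.fst ⊆ Dn.erase x := by
    intro y hy
    obtain ⟨q, hq, rfl⟩ := Finset.mem_image.1 hy
    exact Finset.mem_erase.2 ⟨fun he => hxm (he ▸ hy), (hmem q hq).1⟩
  have h5 : (m.image Prod.fst).card ≤ Dn.card - 1 := by
    have := Finset.card_le_card h4
    rw [Finset.card_erase_of_mem hx] at this
    exact this
  have h6 : 0 < Dn.card := Finset.card_pos.2 ⟨x, hx⟩
  omega

lemma snd_fiber_card {m : Finset (ℕ × ℕ)}
    (hsnd : ∀ q ∈ m, ∀ r ∈ m, q.2 = r.2 → q = r) (e : ℕ) :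
    (m.filter fun q => q.2 = e).card ≤ 1 :=
  Finset.card_le_one.2 fun a ha b hb => by
    have ha' := Finset.mem_filter.1 ha
    have hb' := Finset.mem_filter.1 hb
    exact hsnd a ha'.1 b hb'.1 (ha'.2.trans hb'.2.symm)

/-- An index whose next request is exactly `t` cannot be matched (as a first component)
in an `OkM`-matching at time `t-1`. -/
lemma unmatched_now {A B : CacheRun S k T σ} {t : ℕ} {m : Finset (ℕ × ℕ)}
    (h1 : 1 ≤ t) (h2 : t ≤ T) (hok : OkM A B (t-1) m) {x0 : ℕ}
    (hν : nextReq σ T x0 = t) : x0 ∉ m.image Prod.fst := by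
  intro hc
  obtain ⟨q, hq, hq1⟩ := Finset.mem_image.1 hc
  obtain ⟨_, _, hq2, hlt⟩ := hok.1 q hq
  have : t - 1 < nextReq σ T q.2 :=
    lastIdx_nu_gt (by omega) (Finset.mem_sdiff.1 hq2).1
  rw [hq1, hν] at hlt
  omega

end Defs
section Helpers
variable {S : Type} [DecidableEq S] {k T : ℕ} {σ : ℕ → S}

lemma sdiff_update_mem {JA JB : Finset ℕ} {t a b : ℕ} (htA : t ∉ JA) (htB : t ∉ JB)
    (hbB : b ∈ JB) (hbA : b ∈ JA) (hba : b ≠ a) :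
    (insert t (JA.erase a)) \ (insert t (JB.erase b)) = insert b ((JA \ JB).erase a) := by
  ext x
  simp only [Finset.mem_insert, Finset.mem_erase, Finset.mem_sdiff, not_or, not_and]
  constructor
  · rintro ⟨hx1, hx2, hx3⟩
    rcases hx1 with rfl | ⟨hxa, hxA⟩
    · exact absurd rfl hx2
    · by_cases hxb : x = b
      · exact Or.inl hxb
      · exact Or.inr ⟨hxa, hxA, fun hxB => (hx3 hxb) hxB⟩
  · rintro (rfl | ⟨hxa, hxA, hxB⟩)
    · exact ⟨Or.inr ⟨hba, hbA⟩, fun he => htB (he ▸ hbB), fun h => absurd rfl h⟩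
    · exact ⟨Or.inr ⟨hxa, hxA⟩, fun he => htA (he ▸ hxA), fun _ hxB' => hxB hxB'⟩

lemma sdiff_update_nomem {JA JB : Finset ℕ} {t a b : ℕ} (htA : t ∉ JA)
    (h : b ∉ JA ∨ b = a) :
    (insert t (JA.erase a)) \ (insert t (JB.erase b)) = (JA \ JB).erase a := by
  ext x
  simp only [Finset.mem_insert, Finset.mem_erase, Finset.mem_sdiff, not_or, not_and]
  constructor
  · rintro ⟨hx1, hx2, hx3⟩
    rcases hx1 with rfl | ⟨hxa, hxA⟩
    · exact absurd rfl hx2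
    · refine ⟨hxa, hxA, ?_⟩
      by_cases hxb : x = b
      · subst hxb
        rcases h with h | h
        · exact absurd hxA h
        · exact absurd h hxa
      · exact fun hxB => (hx3 hxb) hxB
  · rintro ⟨hxa, hxA, hxB⟩
    exact ⟨Or.inr ⟨hxa, hxA⟩, fun he => htA (he ▸ hxA), fun _ hxB' => hxB hxB'⟩

lemma inj_insert {m : Finset (ℕ × ℕ)} (f : ℕ × ℕ → ℕ)
    (hinj : ∀ q ∈ m, ∀ r ∈ m, f q = f r → q = r) {p : ℕ × ℕ} (hp : f p ∉ m.image f) :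
    ∀ q ∈ insert p m, ∀ r ∈ insert p m, f q = f r → q = r := by
  intro q hq r hr h
  rcases Finset.mem_insert.1 hq with hq' | hq' <;> rcases Finset.mem_insert.1 hr with hr' | hr'
  · rw [hq', hr']
  · exact absurd (Finset.mem_image.2 ⟨r, hr', by rw [← h, hq']⟩) hp
  · exact absurd (Finset.mem_image.2 ⟨q, hq', by rw [h, hr']⟩) hp
  · exact hinj q hq' r hr' h

lemma inj_filter {m : Finset (ℕ × ℕ)} (f : ℕ × ℕ → ℕ) (P : ℕ × ℕ → Prop)
    [DecidablePred P] (hinj : ∀ q ∈ m, ∀ r ∈ m, f q = f r → q = r) :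
    ∀ q ∈ m.filter P, ∀ r ∈ m.filter P, f q = f r → q = r :=
  fun q hq r hr h => hinj q (Finset.filter_subset _ _ hq) r (Finset.filter_subset _ _ hr) h

lemma card_le_insert_erase {U' U : Finset ℕ} {a b : ℕ} (h : U' ⊆ insert a (U.erase b))
    (hb : b ∈ U) : U'.card ≤ U.card := by
  calc U'.card ≤ (insert a (U.erase b)).card := Finset.card_le_card h
    _ ≤ (U.erase b).card + 1 := Finset.card_insert_le _ _
    _ = U.card := by rw [Finset.card_erase_of_mem hb]; have := Finset.card_pos.2 ⟨b, hb⟩; omega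

lemma card_lt_erase {U' U : Finset ℕ} {b : ℕ} (h : U' ⊆ U.erase b) (hb : b ∈ U) :
    U'.card + 1 ≤ U.card := by
  have h1 : U'.card ≤ (U.erase b).card := Finset.card_le_card h
  rw [Finset.card_erase_of_mem hb] at h1
  have := Finset.card_pos.2 ⟨b, hb⟩
  omega

lemma card_le_union_small {U' U W : Finset ℕ} (h : U' ⊆ U ∪ W) (hW : W.card ≤ 1) :
    U'.card ≤ U.card + 1 := by
  calc U'.card ≤ (U ∪ W).card := Finset.card_le_card h
    _ ≤ U.card + W.card := Finset.card_union_le _ _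
    _ ≤ U.card + 1 := by omega

lemma card_le_erase_union_small {U' U W : Finset ℕ} {b : ℕ} (h : U' ⊆ (U.erase b) ∪ W)
    (hb : b ∈ U) (hW : W.card ≤ 1) : U'.card ≤ U.card := by
  calc U'.card ≤ ((U.erase b) ∪ W).card := Finset.card_le_card h
    _ ≤ (U.erase b).card + W.card := Finset.card_union_le _ _
    _ ≤ U.card := by
        rw [Finset.card_erase_of_mem hb]
        have := Finset.card_pos.2 ⟨b, hb⟩
        omega

lemma mem_UU {A B : CacheRun S k T σ} {t : ℕ} {m : Finset (ℕ × ℕ)} {x : ℕ} :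
    x ∈ UU A B t m ↔ (x ∈ lastIdx A t ∧ x ∉ lastIdx B t) ∧ nextReq σ T x ≤ T ∧
      x ∉ m.image Prod.fst := by
  simp [UU, Finset.mem_filter, Finset.mem_sdiff, and_assoc]

end Helpers
section Main
variable {S : Type} [DecidableEq S] {k T : ℕ} {σ : ℕ → S}

theorem invariant_main (A B : CacheRun S k T σ) :
    ∀ t, t ≤ T → ∃ m : Finset (ℕ × ℕ), OkM A B t m ∧
      missCnt B t + (UU A B t m).card ≤ missCnt A t + mistCnt B t := by
  intro t
  induction t with
  | zero =>
    intro _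
    refine ⟨∅, ⟨fun q hq => absurd hq (Finset.notMem_empty _),
      fun q hq => absurd hq (Finset.notMem_empty _),
      fun q hq => absurd hq (Finset.notMem_empty _)⟩, ?_⟩
    simp [missCnt, mistCnt, UU, lastIdx_zero]
  | succ n ih =>
    intro ht
    obtain ⟨m, hok, hineq⟩ := ih (by omega)
    obtain ⟨hok1, hok2, hok3⟩ := hok
    have h1 : (1:ℕ) ≤ n + 1 := by omega
    have hn1 : n + 1 - 1 = n := by omega
    have htA : (n+1) ∉ lastIdx A n := notMem_lastIdx_gt (by omega)
    have htB : (n+1) ∉ lastIdx B n := notMem_lastIdx_gt (by omega)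
    have hmA := missCnt_step A h1
    have hmB := missCnt_step B h1
    have hmt := mistCnt_step B h1
    rw [hn1] at hmA hmB hmt
    have hmt_ge : mistCnt B n ≤ mistCnt B (n+1) := by rw [hmt]; split <;> omega
    rcases joint_cases A B h1 ht with ⟨hA, hB⟩ | ⟨hA, hB, hJeq, hcA, hcB⟩ |
      ⟨hA, hB, hcB⟩ | ⟨hA, hB, hcA⟩ | ⟨hA, hB, hcA, hcB⟩ <;> rw [hn1] at hA hB
    -- Case HH: both hit
    · obtain ⟨x0, hx0A, hσ0A, hν0A, hJA'⟩ := J_hit (R := A) h1 ht (by rw [hn1]; exact hA)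
      obtain ⟨y0, hy0B, hσ0B, hν0B, hJB'⟩ := J_hit (R := B) h1 ht (by rw [hn1]; exact hB)
      rw [hn1] at hx0A hJA' hy0B hJB'
      have hxy : y0 = x0 := last_eq hy0B hx0A (hσ0B.trans hσ0A.symm)
      subst hxy
      have hDn : lastIdx A (n+1) \ lastIdx B (n+1)
          = (lastIdx A n \ lastIdx B n).erase y0 := by
        rw [hJA', hJB']; exact sdiff_update_nomem htA (Or.inr rfl)
      have hDn' : lastIdx B (n+1) \ lastIdx A (n+1)
          = (lastIdx B n \ lastIdx A n).erase y0 := by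
        rw [hJB', hJA']; exact sdiff_update_nomem htB (Or.inr rfl)
      have hDe : (lastIdx A n \ lastIdx B n).erase y0 = lastIdx A n \ lastIdx B n :=
        Finset.erase_eq_of_notMem (by simp [Finset.mem_sdiff, hy0B])
      have hD'e : (lastIdx B n \ lastIdx A n).erase y0 = lastIdx B n \ lastIdx A n :=
        Finset.erase_eq_of_notMem (by simp [Finset.mem_sdiff, hx0A])
      refine ⟨m, ⟨?_, hok2, hok3⟩, ?_⟩
      · intro q hq
        obtain ⟨hq1, hq2, hq3, hq4⟩ := hok1 q hq
        exact ⟨by rw [hDn, hDe]; exact hq1, hq2, by rw [hDn', hD'e]; exact hq3, hq4⟩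
      · have hUU : UU A B (n+1) m = UU A B n m := by unfold UU; rw [hDn, hDe]
        have hiA : (if σ (n+1) ∉ A.C n then 1 else 0) = 0 := if_neg (fun hc => hc hA)
        have hiB : (if σ (n+1) ∉ B.C n then 1 else 0) = 0 := if_neg (fun hc => hc hB)
        rw [hUU, hmA, hmB, hiA, hiB]
        omega
    -- Case NN: both miss, not full
    · obtain hJA' := J_missNF (R := A) h1 ht (by rw [hn1]; exact hA) (by rw [hn1]; exact hcA)
      obtain hJB' := J_missNF (R := B) h1 ht (by rw [hn1]; exact hB) (by rw [hn1]; exact hcB)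
      rw [hn1] at hJA' hJB' hJeq
      have hJ : lastIdx A (n+1) = lastIdx B (n+1) := by rw [hJA', hJB', hJeq]
      refine ⟨∅, ⟨fun q hq => absurd hq (Finset.notMem_empty _),
        fun q hq => absurd hq (Finset.notMem_empty _),
        fun q hq => absurd hq (Finset.notMem_empty _)⟩, ?_⟩
      have hUU : UU A B (n+1) (∅ : Finset (ℕ × ℕ)) = ∅ := by
        unfold UU; rw [hJ, Finset.sdiff_self, Finset.filter_empty]
      have hiA : (if σ (n+1) ∉ A.C n then 1 else 0) = 1 := if_pos hA
      have hiB : (if σ (n+1) ∉ B.C n then 1 else 0) = 1 := if_pos hB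
      rw [hUU, hmA, hmB, hiA, hiB]
      simp only [Finset.card_empty, add_zero]
      omega
    -- Case HF: A hits, B evicts
    · obtain ⟨x0, hx0A, hσ0A, hν0A, hJA'⟩ := J_hit (R := A) h1 ht (by rw [hn1]; exact hA)
      obtain ⟨e, heB, hσe, hJB'⟩ := J_missF (R := B) h1 ht (by rw [hn1]; exact hB)
        (by rw [hn1]; exact hcB)
      rw [hn1] at hx0A hJA' heB hJB'
      have hx0nB : x0 ∉ lastIdx B n := fun hc =>
        hB (by rw [← hσ0A]; exact (mem_lastIdx.1 hc).2.1)
      have hx0e : x0 ≠ e := fun hc => hx0nB (hc ▸ heB)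
      have hx0live : nextReq σ T x0 ≤ T := by rw [hν0A]; exact ht
      have hx0un : x0 ∉ m.image Prod.fst :=
        unmatched_now h1 ht ⟨hok1, hok2, hok3⟩ hν0A
      have hx0U : x0 ∈ UU A B n m := mem_UU.2 ⟨⟨hx0A, hx0nB⟩, hx0live, hx0un⟩
      have hDn' : lastIdx B (n+1) \ lastIdx A (n+1)
          = (lastIdx B n \ lastIdx A n).erase e := by
        rw [hJB', hJA']; exact sdiff_update_nomem htB (Or.inl hx0nB)
      have hiA : (if σ (n+1) ∉ A.C n then 1 else 0) = 0 := if_neg (fun hc => hc hA)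
      have hiB : (if σ (n+1) ∉ B.C n then 1 else 0) = 1 := if_pos hB
      by_cases hmist : ∃ z ∈ lastIdx B n, nextReq σ T e < nextReq σ T z
      · -- mistake step
        have hMT : MistakeAt B (n+1) := ⟨hB, hcB, e, heB, hσe, hmist⟩
        have hmt1 : mistCnt B (n+1) = mistCnt B n + 1 := by rw [hmt, if_pos hMT]
        by_cases heA : e ∈ lastIdx A n
        · have hDn : lastIdx A (n+1) \ lastIdx B (n+1)
              = insert e ((lastIdx A n \ lastIdx B n).erase x0) := by
            rw [hJA', hJB']
            exact sdiff_update_mem htA htB heB heA (fun hc => hx0e hc.symm)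
          refine ⟨m, ⟨?_, hok2, hok3⟩, ?_⟩
          · intro q hq
            obtain ⟨hq1, hq2, hq3, hq4⟩ := hok1 q hq
            have hq1x0 : q.1 ≠ x0 := fun hc => hx0un (Finset.mem_image.2 ⟨q, hq, hc⟩)
            have hq3e : q.2 ≠ e := fun hc => (Finset.mem_sdiff.1 hq3).2 (hc ▸ heA)
            refine ⟨?_, hq2, ?_, hq4⟩
            · rw [hDn]; exact Finset.mem_insert_of_mem (Finset.mem_erase.2 ⟨hq1x0, hq1⟩)
            · rw [hDn']; exact Finset.mem_erase.2 ⟨hq3e, hq3⟩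
          · have hUsub : UU A B (n+1) m ⊆ insert e ((UU A B n m).erase x0) := by
              intro x hx
              obtain ⟨⟨hxA', hxB'⟩, hxlive, hxim⟩ := mem_UU.1 hx
              have hxDn : x ∈ insert e ((lastIdx A n \ lastIdx B n).erase x0) := by
                rw [← hDn]; exact Finset.mem_sdiff.2 ⟨hxA', hxB'⟩
              rcases Finset.mem_insert.1 hxDn with rfl | hxDn
              · exact Finset.mem_insert_self _ _
              · obtain ⟨hxx0, hxD⟩ := Finset.mem_erase.1 hxDn
                exact Finset.mem_insert_of_mem (Finset.mem_erase.2 ⟨hxx0,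
                  mem_UU.2 ⟨Finset.mem_sdiff.1 hxD, hxlive, hxim⟩⟩)
            have hcard := card_le_insert_erase hUsub hx0U
            rw [hmA, hmB, hiA, hiB, hmt1]
            omega
        · refine ⟨m.filter (fun q => q.2 ≠ e), ⟨?_, inj_filter _ _ hok2,
            inj_filter _ _ hok3⟩, ?_⟩
          · intro q hq
            have hqm := Finset.filter_subset _ _ hq
            have hq2ne := (Finset.mem_filter.1 hq).2
            obtain ⟨hq1, hq2, hq3, hq4⟩ := hok1 q hqm
            have hq1x0 : q.1 ≠ x0 := fun hc => hx0un (Finset.mem_image.2 ⟨q, hqm, hc⟩)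
            have hDn : lastIdx A (n+1) \ lastIdx B (n+1)
                = (lastIdx A n \ lastIdx B n).erase x0 := by
              rw [hJA', hJB']; exact sdiff_update_nomem htA (Or.inl heA)
            refine ⟨?_, hq2, ?_, hq4⟩
            · rw [hDn]; exact Finset.mem_erase.2 ⟨hq1x0, hq1⟩
            · rw [hDn']; exact Finset.mem_erase.2 ⟨hq2ne, hq3⟩
          · have hDn : lastIdx A (n+1) \ lastIdx B (n+1)
                = (lastIdx A n \ lastIdx B n).erase x0 := by
              rw [hJA', hJB']; exact sdiff_update_nomem htA (Or.inl heA)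
            have hUsub : UU A B (n+1) (m.filter (fun q => q.2 ≠ e)) ⊆
                ((UU A B n m).erase x0) ∪ (m.filter (fun q => q.2 = e)).image Prod.fst := by
              intro x hx
              obtain ⟨⟨hxA', hxB'⟩, hxlive, hxim⟩ := mem_UU.1 hx
              have hxDn : x ∈ (lastIdx A n \ lastIdx B n).erase x0 := by
                rw [← hDn]; exact Finset.mem_sdiff.2 ⟨hxA', hxB'⟩
              obtain ⟨hxx0, hxD⟩ := Finset.mem_erase.1 hxDn
              by_cases hxm : x ∈ m.image Prod.fst
              · obtain ⟨q, hq, hqx⟩ := Finset.mem_image.1 hxm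
                by_cases hq2 : q.2 = e
                · exact Finset.mem_union_right _
                    (Finset.mem_image.2 ⟨q, Finset.mem_filter.2 ⟨hq, hq2⟩, hqx⟩)
                · exact absurd (Finset.mem_image.2 ⟨q, Finset.mem_filter.2 ⟨hq, hq2⟩, hqx⟩)
                    hxim
              · exact Finset.mem_union_left _ (Finset.mem_erase.2 ⟨hxx0,
                  mem_UU.2 ⟨Finset.mem_sdiff.1 hxD, hxlive, hxm⟩⟩)
            have hcard := card_le_erase_union_small hUsub hx0U
              (le_trans Finset.card_image_le (snd_fiber_card hok3 e))
            rw [hmA, hmB, hiA, hiB, hmt1]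
            omega
      · -- no mistake: e has maximal next request among B's cache
        push_neg at hmist
        by_cases heA : e ∈ lastIdx A n
        · have hDn : lastIdx A (n+1) \ lastIdx B (n+1)
              = insert e ((lastIdx A n \ lastIdx B n).erase x0) := by
            rw [hJA', hJB']
            exact sdiff_update_mem htA htB heB heA (fun hc => hx0e hc.symm)
          have hokn : ∀ q ∈ m, q.1 ∈ lastIdx A (n+1) \ lastIdx B (n+1) ∧
              nextReq σ T q.1 ≤ T ∧ q.2 ∈ lastIdx B (n+1) \ lastIdx A (n+1) ∧
              nextReq σ T q.2 < nextReq σ T q.1 := by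
            intro q hq
            obtain ⟨hq1, hq2, hq3, hq4⟩ := hok1 q hq
            have hq1x0 : q.1 ≠ x0 := fun hc => hx0un (Finset.mem_image.2 ⟨q, hq, hc⟩)
            have hq3e : q.2 ≠ e := fun hc => (Finset.mem_sdiff.1 hq3).2 (hc ▸ heA)
            refine ⟨?_, hq2, ?_, hq4⟩
            · rw [hDn]; exact Finset.mem_insert_of_mem (Finset.mem_erase.2 ⟨hq1x0, hq1⟩)
            · rw [hDn']; exact Finset.mem_erase.2 ⟨hq3e, hq3⟩
          by_cases helive : nextReq σ T e ≤ T
          · have heDn : e ∈ lastIdx A (n+1) \ lastIdx B (n+1) := by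
              rw [hDn]; exact Finset.mem_insert_self _ _
            have heun : e ∉ m.image Prod.fst := by
              intro hc
              obtain ⟨q, hq, hqe⟩ := Finset.mem_image.1 hc
              exact (Finset.mem_sdiff.1 (hok1 q hq).1).2 (hqe ▸ heB)
            obtain ⟨y', hy'mem, hy'ns⟩ := fresh_partner
              (fun q hq => ⟨(hokn q hq).1, (hokn q hq).2.2.1⟩) hok2
              (D_card_eq A B ht) heDn heun
            have hy'D : y' ∈ (lastIdx B n \ lastIdx A n).erase e := by
              rw [← hDn']; exact hy'mem
            obtain ⟨hy'e, hy'D'⟩ := Finset.mem_erase.1 hy'D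
            have hy'B : y' ∈ lastIdx B n := (Finset.mem_sdiff.1 hy'D').1
            have hy'lt : nextReq σ T y' < nextReq σ T e :=
              lt_of_le_of_ne (hmist y' hy'B)
                (fun hc => hy'e (nextReq_inj (by rw [hc]; exact helive) hc))
            refine ⟨insert (e, y') m, ⟨?_, inj_insert Prod.fst hok2 heun,
              inj_insert Prod.snd hok3 hy'ns⟩, ?_⟩
            · intro q hq
              rcases Finset.mem_insert.1 hq with rfl | hq
              · exact ⟨heDn, helive, hy'mem, hy'lt⟩
              · exact hokn q hq
            · have hUsub : UU A B (n+1) (insert (e, y') m) ⊆ (UU A B n m).erase x0 := by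
                intro x hx
                obtain ⟨⟨hxA', hxB'⟩, hxlive, hxim⟩ := mem_UU.1 hx
                have hxDn : x ∈ insert e ((lastIdx A n \ lastIdx B n).erase x0) := by
                  rw [← hDn]; exact Finset.mem_sdiff.2 ⟨hxA', hxB'⟩
                rcases Finset.mem_insert.1 hxDn with rfl | hxDn
                · exact absurd (Finset.mem_image.2 ⟨(x, y'), Finset.mem_insert_self _ _, rfl⟩)
                    hxim
                · obtain ⟨hxx0, hxD⟩ := Finset.mem_erase.1 hxDn
                  refine Finset.mem_erase.2 ⟨hxx0,
                    mem_UU.2 ⟨Finset.mem_sdiff.1 hxD, hxlive, fun hc => hxim ?_⟩⟩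
                  obtain ⟨q, hq, hqx⟩ := Finset.mem_image.1 hc
                  exact Finset.mem_image.2 ⟨q, Finset.mem_insert_of_mem hq, hqx⟩
              have hcard := card_lt_erase hUsub hx0U
              rw [hmA, hmB, hiA, hiB]
              omega
          · refine ⟨m, ⟨hokn, hok2, hok3⟩, ?_⟩
            have hUsub : UU A B (n+1) m ⊆ (UU A B n m).erase x0 := by
              intro x hx
              obtain ⟨⟨hxA', hxB'⟩, hxlive, hxim⟩ := mem_UU.1 hx
              have hxDn : x ∈ insert e ((lastIdx A n \ lastIdx B n).erase x0) := by
                rw [← hDn]; exact Finset.mem_sdiff.2 ⟨hxA', hxB'⟩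
              rcases Finset.mem_insert.1 hxDn with rfl | hxDn
              · exact absurd hxlive helive
              · obtain ⟨hxx0, hxD⟩ := Finset.mem_erase.1 hxDn
                exact Finset.mem_erase.2 ⟨hxx0,
                  mem_UU.2 ⟨Finset.mem_sdiff.1 hxD, hxlive, hxim⟩⟩
            have hcard := card_lt_erase hUsub hx0U
            rw [hmA, hmB, hiA, hiB]
            omega
        · have hDn : lastIdx A (n+1) \ lastIdx B (n+1)
              = (lastIdx A n \ lastIdx B n).erase x0 := by
            rw [hJA', hJB']; exact sdiff_update_nomem htA (Or.inl heA)
          have hokn'' : ∀ q ∈ m.filter (fun q => q.2 ≠ e),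
              q.1 ∈ lastIdx A (n+1) \ lastIdx B (n+1) ∧ nextReq σ T q.1 ≤ T ∧
              q.2 ∈ lastIdx B (n+1) \ lastIdx A (n+1) ∧
              nextReq σ T q.2 < nextReq σ T q.1 := by
            intro q hq
            have hqm := Finset.filter_subset _ _ hq
            have hq2ne := (Finset.mem_filter.1 hq).2
            obtain ⟨hq1, hq2, hq3, hq4⟩ := hok1 q hqm
            have hq1x0 : q.1 ≠ x0 := fun hc => hx0un (Finset.mem_image.2 ⟨q, hqm, hc⟩)
            refine ⟨?_, hq2, ?_, hq4⟩
            · rw [hDn]; exact Finset.mem_erase.2 ⟨hq1x0, hq1⟩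
            · rw [hDn']; exact Finset.mem_erase.2 ⟨hq2ne, hq3⟩
          by_cases hemat : e ∈ m.image Prod.snd
          · obtain ⟨q1, hq1m, hq1e⟩ := Finset.mem_image.1 hemat
            obtain ⟨hq11, hq12, hq13, hq14⟩ := hok1 q1 hq1m
            have hx1x0 : q1.1 ≠ x0 := fun hc => hx0un (Finset.mem_image.2 ⟨q1, hq1m, hc⟩)
            have hx1Dn : q1.1 ∈ lastIdx A (n+1) \ lastIdx B (n+1) := by
              rw [hDn]; exact Finset.mem_erase.2 ⟨hx1x0, (Finset.mem_sdiff.1 hq11).1 |>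
                (fun _ => hq11) |> fun _ => hq11⟩
            have hx1un'' : q1.1 ∉ (m.filter (fun q => q.2 ≠ e)).image Prod.fst := by
              intro hc
              obtain ⟨r, hr, hrx⟩ := Finset.mem_image.1 hc
              have hrm := Finset.filter_subset _ _ hr
              have : r = q1 := hok2 r hrm q1 hq1m hrx
              exact (Finset.mem_filter.1 hr).2 (this ▸ hq1e)
            obtain ⟨y', hy'mem, hy'ns⟩ := fresh_partner
              (fun q hq => ⟨(hokn'' q hq).1, (hokn'' q hq).2.2.1⟩)
              (inj_filter _ _ hok2) (D_card_eq A B ht) hx1Dn hx1un''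
            have hy'D : y' ∈ (lastIdx B n \ lastIdx A n).erase e := by
              rw [← hDn']; exact hy'mem
            obtain ⟨hy'e, hy'D'⟩ := Finset.mem_erase.1 hy'D
            have hy'B : y' ∈ lastIdx B n := (Finset.mem_sdiff.1 hy'D').1
            have hy'lt : nextReq σ T y' < nextReq σ T q1.1 :=
              lt_of_le_of_lt (hmist y' hy'B) (by rw [← hq1e]; exact hq14)
            refine ⟨insert (q1.1, y') (m.filter (fun q => q.2 ≠ e)),
              ⟨?_, inj_insert Prod.fst (inj_filter _ _ hok2) hx1un'',
               inj_insert Prod.snd (inj_filter _ _ hok3) hy'ns⟩, ?_⟩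
            · intro q hq
              rcases Finset.mem_insert.1 hq with rfl | hq
              · exact ⟨hx1Dn, hq12, hy'mem, hy'lt⟩
              · exact hokn'' q hq
            · have hUsub : UU A B (n+1) (insert (q1.1, y') (m.filter (fun q => q.2 ≠ e)))
                  ⊆ (UU A B n m).erase x0 := by
                intro x hx
                obtain ⟨⟨hxA', hxB'⟩, hxlive, hxim⟩ := mem_UU.1 hx
                have hxDn : x ∈ (lastIdx A n \ lastIdx B n).erase x0 := by
                  rw [← hDn]; exact Finset.mem_sdiff.2 ⟨hxA', hxB'⟩
                obtain ⟨hxx0, hxD⟩ := Finset.mem_erase.1 hxDn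
                refine Finset.mem_erase.2 ⟨hxx0,
                  mem_UU.2 ⟨Finset.mem_sdiff.1 hxD, hxlive, fun hc => ?_⟩⟩
                obtain ⟨q, hq, hqx⟩ := Finset.mem_image.1 hc
                by_cases hq2 : q.2 = e
                · have : q = q1 := hok3 q hq q1 hq1m (hq2.trans hq1e.symm)
                  exact hxim (Finset.mem_image.2 ⟨(q1.1, y'), Finset.mem_insert_self _ _,
                    by rw [← hqx, this]⟩)
                · exact hxim (Finset.mem_image.2 ⟨q, Finset.mem_insert_of_mem
                    (Finset.mem_filter.2 ⟨hq, hq2⟩), hqx⟩)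
              have hcard := card_lt_erase hUsub hx0U
              rw [hmA, hmB, hiA, hiB]
              omega
          · refine ⟨m.filter (fun q => q.2 ≠ e), ⟨hokn'', inj_filter _ _ hok2,
              inj_filter _ _ hok3⟩, ?_⟩
            have hUsub : UU A B (n+1) (m.filter (fun q => q.2 ≠ e))
                ⊆ (UU A B n m).erase x0 := by
              intro x hx
              obtain ⟨⟨hxA', hxB'⟩, hxlive, hxim⟩ := mem_UU.1 hx
              have hxDn : x ∈ (lastIdx A n \ lastIdx B n).erase x0 := by
                rw [← hDn]; exact Finset.mem_sdiff.2 ⟨hxA', hxB'⟩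
              obtain ⟨hxx0, hxD⟩ := Finset.mem_erase.1 hxDn
              refine Finset.mem_erase.2 ⟨hxx0,
                mem_UU.2 ⟨Finset.mem_sdiff.1 hxD, hxlive, fun hc => ?_⟩⟩
              obtain ⟨q, hq, hqx⟩ := Finset.mem_image.1 hc
              by_cases hq2 : q.2 = e
              · exact hemat (Finset.mem_image.2 ⟨q, hq, hq2⟩)
              · exact hxim (Finset.mem_image.2 ⟨q, Finset.mem_filter.2 ⟨hq, hq2⟩, hqx⟩)
            have hcard := card_lt_erase hUsub hx0U
            rw [hmA, hmB, hiA, hiB]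
            omega
    -- Case FH: A evicts, B hits
    · obtain ⟨eA, heA, hσeA, hJA'⟩ := J_missF (R := A) h1 ht (by rw [hn1]; exact hA)
        (by rw [hn1]; exact hcA)
      obtain ⟨y0, hy0B, hσ0B, hν0B, hJB'⟩ := J_hit (R := B) h1 ht (by rw [hn1]; exact hB)
      rw [hn1] at heA hJA' hy0B hJB'
      have hy0nA : y0 ∉ lastIdx A n := fun hc =>
        hA (by rw [← hσ0B]; exact (mem_lastIdx.1 hc).2.1)
      have hDn : lastIdx A (n+1) \ lastIdx B (n+1)
          = (lastIdx A n \ lastIdx B n).erase eA := by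
        rw [hJA', hJB']; exact sdiff_update_nomem htA (Or.inl hy0nA)
      have hDn'sub : ∀ x, x ∈ lastIdx B n \ lastIdx A n → x ≠ y0 →
          x ∈ lastIdx B (n+1) \ lastIdx A (n+1) := by
        intro x hx hxy
        obtain ⟨hxB, hxA⟩ := Finset.mem_sdiff.1 hx
        have hxn : x ≤ n := (mem_lastIdx.1 hxB).1.2
        rw [hJB', hJA', Finset.mem_sdiff]
        constructor
        · exact Finset.mem_insert_of_mem (Finset.mem_erase.2 ⟨hxy, hxB⟩)
        · intro hc
          rcases Finset.mem_insert.1 hc with hc | hc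
          · omega
          · exact hxA (Finset.mem_erase.1 hc).2
      refine ⟨m.filter (fun q => q.1 ≠ eA ∧ q.2 ≠ y0), ⟨?_, inj_filter _ _ hok2,
        inj_filter _ _ hok3⟩, ?_⟩
      · intro q hq
        have hqm := Finset.filter_subset _ _ hq
        obtain ⟨hq1ne, hq2ne⟩ := (Finset.mem_filter.1 hq).2
        obtain ⟨hq1, hq2, hq3, hq4⟩ := hok1 q hqm
        refine ⟨?_, hq2, hDn'sub _ hq3 hq2ne, hq4⟩
        rw [hDn]; exact Finset.mem_erase.2 ⟨hq1ne, hq1⟩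
      · have hUsub : UU A B (n+1) (m.filter (fun q => q.1 ≠ eA ∧ q.2 ≠ y0)) ⊆
            UU A B n m ∪ (m.filter (fun q => q.2 = y0)).image Prod.fst := by
          intro x hx
          obtain ⟨⟨hxA', hxB'⟩, hxlive, hxim⟩ := mem_UU.1 hx
          have hxDn : x ∈ (lastIdx A n \ lastIdx B n).erase eA := by
            rw [← hDn]; exact Finset.mem_sdiff.2 ⟨hxA', hxB'⟩
          obtain ⟨hxeA, hxD⟩ := Finset.mem_erase.1 hxDn
          by_cases hxm : x ∈ m.image Prod.fst
          · obtain ⟨q, hq, hqx⟩ := Finset.mem_image.1 hxm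
            by_cases hq2 : q.2 = y0
            · exact Finset.mem_union_right _
                (Finset.mem_image.2 ⟨q, Finset.mem_filter.2 ⟨hq, hq2⟩, hqx⟩)
            · exfalso
              apply hxim
              exact Finset.mem_image.2 ⟨q, Finset.mem_filter.2 ⟨hq, by rw [hqx]; exact hxeA, hq2⟩, hqx⟩
          · refine Finset.mem_union_left _ (mem_UU.2 ⟨Finset.mem_sdiff.1 hxD, hxlive, hxm⟩)
        have hcard : (UU A B (n+1) (m.filter (fun q => q.1 ≠ eA ∧ q.2 ≠ y0))).card ≤
            (UU A B n m).card + 1 :=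
          card_le_union_small hUsub (le_trans Finset.card_image_le (snd_fiber_card hok3 y0))
        have hiA : (if σ (n+1) ∉ A.C n then 1 else 0) = 1 := if_pos hA
        have hiB : (if σ (n+1) ∉ B.C n then 1 else 0) = 0 := if_neg (fun hc => hc hB)
        rw [hmA, hmB, hiA, hiB]
        omega
    -- Case FF: both evict
    · obtain ⟨eA, heA, hσeA, hJA'⟩ := J_missF (R := A) h1 ht (by rw [hn1]; exact hA)
        (by rw [hn1]; exact hcA)
      obtain ⟨eB, heB, hσeB, hJB'⟩ := J_missF (R := B) h1 ht (by rw [hn1]; exact hB)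
        (by rw [hn1]; exact hcB)
      rw [hn1] at heA hJA' heB hJB'
      have hiA : (if σ (n+1) ∉ A.C n then 1 else 0) = 1 := if_pos hA
      have hiB : (if σ (n+1) ∉ B.C n then 1 else 0) = 1 := if_pos hB
      have heAn : eA ≤ n := (mem_lastIdx.1 heA).1.2
      have heBn : eB ≤ n := (mem_lastIdx.1 heB).1.2
      have hDnsub : ∀ x, x ∈ lastIdx A n \ lastIdx B n → x ≠ eA →
          x ∈ lastIdx A (n+1) \ lastIdx B (n+1) := by
        intro x hx hxe
        obtain ⟨hxA, hxB⟩ := Finset.mem_sdiff.1 hx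
        have hxn : x ≤ n := (mem_lastIdx.1 hxA).1.2
        rw [hJA', hJB', Finset.mem_sdiff]
        refine ⟨Finset.mem_insert_of_mem (Finset.mem_erase.2 ⟨hxe, hxA⟩), fun hc => ?_⟩
        rcases Finset.mem_insert.1 hc with hc | hc
        · omega
        · exact hxB (Finset.mem_erase.1 hc).2
      have hDn'sub : ∀ x, x ∈ lastIdx B n \ lastIdx A n → x ≠ eB →
          x ∈ lastIdx B (n+1) \ lastIdx A (n+1) := by
        intro x hx hxe
        obtain ⟨hxB, hxA⟩ := Finset.mem_sdiff.1 hx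
        have hxn : x ≤ n := (mem_lastIdx.1 hxB).1.2
        rw [hJA', hJB', Finset.mem_sdiff]
        refine ⟨Finset.mem_insert_of_mem (Finset.mem_erase.2 ⟨hxe, hxB⟩), fun hc => ?_⟩
        rcases Finset.mem_insert.1 hc with hc | hc
        · omega
        · exact hxA (Finset.mem_erase.1 hc).2
      by_cases hne : eB = eA
      · -- both evict the same index
        have hDn : lastIdx A (n+1) \ lastIdx B (n+1)
            = (lastIdx A n \ lastIdx B n).erase eA := by
          rw [hJA', hJB']; exact sdiff_update_nomem htA (Or.inr hne)
        refine ⟨m, ⟨?_, hok2, hok3⟩, ?_⟩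
        · intro q hq
          obtain ⟨hq1, hq2, hq3, hq4⟩ := hok1 q hq
          refine ⟨hDnsub _ hq1 (fun hc => (Finset.mem_sdiff.1 hq1).2
              (by rw [hc, ← hne]; exact heB)), hq2,
            hDn'sub _ hq3 (fun hc => (Finset.mem_sdiff.1 hq3).2
              (by rw [hc, hne]; exact heA)), hq4⟩
        · have hUsub : UU A B (n+1) m ⊆ UU A B n m := by
            intro x hx
            obtain ⟨⟨hxA', hxB'⟩, hxlive, hxim⟩ := mem_UU.1 hx
            have hxDn : x ∈ (lastIdx A n \ lastIdx B n).erase eA := by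
              rw [← hDn]; exact Finset.mem_sdiff.2 ⟨hxA', hxB'⟩
            exact mem_UU.2 ⟨Finset.mem_sdiff.1 (Finset.mem_erase.1 hxDn).2, hxlive, hxim⟩
          have hcard := Finset.card_le_card hUsub
          rw [hmA, hmB, hiA, hiB]
          omega
      · by_cases hmist : ∃ z ∈ lastIdx B n, nextReq σ T eB < nextReq σ T z
        · -- mistake step
          have hMT : MistakeAt B (n+1) := ⟨hB, hcB, eB, heB, hσeB, hmist⟩
          have hmt1 : mistCnt B (n+1) = mistCnt B n + 1 := by rw [hmt, if_pos hMT]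
          by_cases heBA : eB ∈ lastIdx A n
          · have hDn : lastIdx A (n+1) \ lastIdx B (n+1)
                = insert eB ((lastIdx A n \ lastIdx B n).erase eA) := by
              rw [hJA', hJB']; exact sdiff_update_mem htA htB heB heBA hne
            refine ⟨m.filter (fun q => q.1 ≠ eA), ⟨?_, inj_filter _ _ hok2,
              inj_filter _ _ hok3⟩, ?_⟩
            · intro q hq
              have hqm := Finset.filter_subset _ _ hq
              have hq1ne := (Finset.mem_filter.1 hq).2
              obtain ⟨hq1, hq2, hq3, hq4⟩ := hok1 q hqm
              refine ⟨hDnsub _ hq1 hq1ne, hq2, hDn'sub _ hq3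
                (fun hc => (Finset.mem_sdiff.1 hq3).2 (hc ▸ heBA)), hq4⟩
            · have hUsub : UU A B (n+1) (m.filter (fun q => q.1 ≠ eA)) ⊆
                  insert eB (UU A B n m) := by
                intro x hx
                obtain ⟨⟨hxA', hxB'⟩, hxlive, hxim⟩ := mem_UU.1 hx
                have hxDn : x ∈ insert eB ((lastIdx A n \ lastIdx B n).erase eA) := by
                  rw [← hDn]; exact Finset.mem_sdiff.2 ⟨hxA', hxB'⟩
                rcases Finset.mem_insert.1 hxDn with rfl | hxDn
                · exact Finset.mem_insert_self _ _
                · obtain ⟨hxeA, hxD⟩ := Finset.mem_erase.1 hxDn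
                  refine Finset.mem_insert_of_mem (mem_UU.2 ⟨Finset.mem_sdiff.1 hxD,
                    hxlive, fun hc => ?_⟩)
                  obtain ⟨q, hq, hqx⟩ := Finset.mem_image.1 hc
                  exact hxim (Finset.mem_image.2 ⟨q, Finset.mem_filter.2
                    ⟨hq, by rw [hqx]; exact hxeA⟩, hqx⟩)
              have hcard : (UU A B (n+1) (m.filter (fun q => q.1 ≠ eA))).card ≤
                  (UU A B n m).card + 1 :=
                le_trans (Finset.card_le_card hUsub) (Finset.card_insert_le _ _)
              rw [hmA, hmB, hiA, hiB, hmt1]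
              omega
          · refine ⟨m.filter (fun q => q.1 ≠ eA ∧ q.2 ≠ eB), ⟨?_, inj_filter _ _ hok2,
              inj_filter _ _ hok3⟩, ?_⟩
            · intro q hq
              have hqm := Finset.filter_subset _ _ hq
              obtain ⟨hq1ne, hq2ne⟩ := (Finset.mem_filter.1 hq).2
              obtain ⟨hq1, hq2, hq3, hq4⟩ := hok1 q hqm
              exact ⟨hDnsub _ hq1 hq1ne, hq2, hDn'sub _ hq3 hq2ne, hq4⟩
            · have hDn : lastIdx A (n+1) \ lastIdx B (n+1)
                  = (lastIdx A n \ lastIdx B n).erase eA := by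
                rw [hJA', hJB']; exact sdiff_update_nomem htA (Or.inl heBA)
              have hUsub : UU A B (n+1) (m.filter (fun q => q.1 ≠ eA ∧ q.2 ≠ eB)) ⊆
                  UU A B n m ∪ (m.filter (fun q => q.2 = eB)).image Prod.fst := by
                intro x hx
                obtain ⟨⟨hxA', hxB'⟩, hxlive, hxim⟩ := mem_UU.1 hx
                have hxDn : x ∈ (lastIdx A n \ lastIdx B n).erase eA := by
                  rw [← hDn]; exact Finset.mem_sdiff.2 ⟨hxA', hxB'⟩
                obtain ⟨hxeA, hxD⟩ := Finset.mem_erase.1 hxDn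
                by_cases hxm : x ∈ m.image Prod.fst
                · obtain ⟨q, hq, hqx⟩ := Finset.mem_image.1 hxm
                  by_cases hq2 : q.2 = eB
                  · exact Finset.mem_union_right _
                      (Finset.mem_image.2 ⟨q, Finset.mem_filter.2 ⟨hq, hq2⟩, hqx⟩)
                  · exact absurd (Finset.mem_image.2 ⟨q, Finset.mem_filter.2
                      ⟨hq, by rw [hqx]; exact hxeA, hq2⟩, hqx⟩) hxim
                · exact Finset.mem_union_left _
                    (mem_UU.2 ⟨Finset.mem_sdiff.1 hxD, hxlive, hxm⟩)
              have hcard := card_le_union_small hUsub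
                (le_trans Finset.card_image_le (snd_fiber_card hok3 eB))
              rw [hmA, hmB, hiA, hiB, hmt1]
              omega
        · -- no mistake
          push_neg at hmist
          by_cases heBA : eB ∈ lastIdx A n
          · have hDn : lastIdx A (n+1) \ lastIdx B (n+1)
                = insert eB ((lastIdx A n \ lastIdx B n).erase eA) := by
              rw [hJA', hJB']; exact sdiff_update_mem htA htB heB heBA hne
            have heBDn : eB ∈ lastIdx A (n+1) \ lastIdx B (n+1) := by
              rw [hDn]; exact Finset.mem_insert_self _ _
            have heBim : eB ∉ m.image Prod.fst := by
              intro hc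
              obtain ⟨q, hq, hqe⟩ := Finset.mem_image.1 hc
              exact (Finset.mem_sdiff.1 (hok1 q hq).1).2 (hqe ▸ heB)
            by_cases helive : nextReq σ T eB ≤ T
            · by_cases heAB : eA ∈ lastIdx B n
              · -- insert (eB, eA)
                have heADn' : eA ∈ lastIdx B (n+1) \ lastIdx A (n+1) := by
                  rw [hJA', hJB', Finset.mem_sdiff]
                  constructor
                  · exact Finset.mem_insert_of_mem
                      (Finset.mem_erase.2 ⟨Ne.symm hne, heAB⟩)
                  · intro hc
                    rcases Finset.mem_insert.1 hc with hc | hc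
                    · omega
                    · exact (Finset.mem_erase.1 hc).1 rfl
                have heAim' : eA ∉ m.image Prod.snd := by
                  intro hc
                  obtain ⟨q, hq, hqe⟩ := Finset.mem_image.1 hc
                  exact (Finset.mem_sdiff.1 (hok1 q hq).2.2.1).2 (hqe ▸ heA)
                have hlt : nextReq σ T eA < nextReq σ T eB :=
                  lt_of_le_of_ne (hmist eA heAB)
                    (fun hc => hne ((nextReq_inj (by rw [hc]; exact helive) hc).symm))
                refine ⟨insert (eB, eA) m, ⟨?_, inj_insert Prod.fst hok2 heBim,
                  inj_insert Prod.snd hok3 heAim'⟩, ?_⟩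
                · intro q hq
                  rcases Finset.mem_insert.1 hq with rfl | hq
                  · exact ⟨heBDn, helive, heADn', hlt⟩
                  · obtain ⟨hq1, hq2, hq3, hq4⟩ := hok1 q hq
                    refine ⟨hDnsub _ hq1 (fun hc => (Finset.mem_sdiff.1 hq1).2
                        (hc ▸ heAB)), hq2,
                      hDn'sub _ hq3 (fun hc => (Finset.mem_sdiff.1 hq3).2
                        (hc ▸ heBA)), hq4⟩
                · have hUsub : UU A B (n+1) (insert (eB, eA) m) ⊆ UU A B n m := by
                    intro x hx
                    obtain ⟨⟨hxA', hxB'⟩, hxlive, hxim⟩ := mem_UU.1 hx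
                    have hxDn : x ∈ insert eB ((lastIdx A n \ lastIdx B n).erase eA) := by
                      rw [← hDn]; exact Finset.mem_sdiff.2 ⟨hxA', hxB'⟩
                    rcases Finset.mem_insert.1 hxDn with rfl | hxDn
                    · exact absurd (Finset.mem_image.2 ⟨(x, eA),
                        Finset.mem_insert_self _ _, rfl⟩) hxim
                    · obtain ⟨hxeA, hxD⟩ := Finset.mem_erase.1 hxDn
                      refine mem_UU.2 ⟨Finset.mem_sdiff.1 hxD, hxlive, fun hc => ?_⟩
                      obtain ⟨q, hq, hqx⟩ := Finset.mem_image.1 hc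
                      exact hxim (Finset.mem_image.2 ⟨q, Finset.mem_insert_of_mem hq, hqx⟩)
                  have hcard := Finset.card_le_card hUsub
                  rw [hmA, hmB, hiA, hiB]
                  omega
              · by_cases heAmat : eA ∈ m.image Prod.fst
                · obtain ⟨q1, hq1m, hq1eA⟩ := Finset.mem_image.1 heAmat
                  obtain ⟨hq11, hq12, hq13, hq14⟩ := hok1 q1 hq1m
                  have hq13ne : q1.2 ≠ eB := fun hc =>
                    (Finset.mem_sdiff.1 hq13).2 (hc ▸ heBA)
                  have hy1Dn' : q1.2 ∈ lastIdx B (n+1) \ lastIdx A (n+1) :=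
                    hDn'sub _ hq13 hq13ne
                  have hy1lt : nextReq σ T q1.2 < nextReq σ T eB :=
                    lt_of_le_of_ne (hmist _ (Finset.mem_sdiff.1 hq13).1)
                      (fun hc => (Finset.mem_sdiff.1 hq13).2
                        ((nextReq_inj (by rw [hc]; exact helive) hc) ▸ heBA))
                  have heBim'' : eB ∉ (m.filter (fun q => q.1 ≠ eA)).image Prod.fst := by
                    intro hc
                    obtain ⟨q, hq, hqe⟩ := Finset.mem_image.1 hc
                    exact heBim (Finset.mem_image.2 ⟨q, Finset.filter_subset _ _ hq, hqe⟩)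
                  have hy1ns'' : q1.2 ∉ (m.filter (fun q => q.1 ≠ eA)).image Prod.snd := by
                    intro hc
                    obtain ⟨r, hr, hre⟩ := Finset.mem_image.1 hc
                    have : r = q1 := hok3 r (Finset.filter_subset _ _ hr) q1 hq1m hre
                    exact (Finset.mem_filter.1 hr).2 (this ▸ hq1eA)
                  refine ⟨insert (eB, q1.2) (m.filter (fun q => q.1 ≠ eA)),
                    ⟨?_, inj_insert Prod.fst (inj_filter _ _ hok2) heBim'',
                     inj_insert Prod.snd (inj_filter _ _ hok3) hy1ns''⟩, ?_⟩
                  · intro q hq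
                    rcases Finset.mem_insert.1 hq with rfl | hq
                    · exact ⟨heBDn, helive, hy1Dn', hy1lt⟩
                    · have hqm := Finset.filter_subset _ _ hq
                      have hq1ne := (Finset.mem_filter.1 hq).2
                      obtain ⟨hq1, hq2, hq3, hq4⟩ := hok1 q hqm
                      exact ⟨hDnsub _ hq1 hq1ne, hq2, hDn'sub _ hq3
                        (fun hc => (Finset.mem_sdiff.1 hq3).2 (hc ▸ heBA)), hq4⟩
                  · have hUsub : UU A B (n+1)
                        (insert (eB, q1.2) (m.filter (fun q => q.1 ≠ eA)))
                        ⊆ UU A B n m := by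
                      intro x hx
                      obtain ⟨⟨hxA', hxB'⟩, hxlive, hxim⟩ := mem_UU.1 hx
                      have hxDn : x ∈ insert eB
                          ((lastIdx A n \ lastIdx B n).erase eA) := by
                        rw [← hDn]; exact Finset.mem_sdiff.2 ⟨hxA', hxB'⟩
                      rcases Finset.mem_insert.1 hxDn with rfl | hxDn
                      · exact absurd (Finset.mem_image.2 ⟨(x, q1.2),
                          Finset.mem_insert_self _ _, rfl⟩) hxim
                      · obtain ⟨hxeA, hxD⟩ := Finset.mem_erase.1 hxDn
                        refine mem_UU.2 ⟨Finset.mem_sdiff.1 hxD, hxlive, fun hc => ?_⟩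
                        obtain ⟨q, hq, hqx⟩ := Finset.mem_image.1 hc
                        exact hxim (Finset.mem_image.2 ⟨q, Finset.mem_insert_of_mem
                          (Finset.mem_filter.2 ⟨hq, by rw [hqx]; exact hxeA⟩), hqx⟩)
                    have hcard := Finset.card_le_card hUsub
                    rw [hmA, hmB, hiA, hiB]
                    omega
                · -- eA not matched as a first component
                  have hokn : ∀ q ∈ m, q.1 ∈ lastIdx A (n+1) \ lastIdx B (n+1) ∧
                      nextReq σ T q.1 ≤ T ∧
                      q.2 ∈ lastIdx B (n+1) \ lastIdx A (n+1) ∧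
                      nextReq σ T q.2 < nextReq σ T q.1 := by
                    intro q hq
                    obtain ⟨hq1, hq2, hq3, hq4⟩ := hok1 q hq
                    refine ⟨hDnsub _ hq1 (fun hc => heAmat
                        (Finset.mem_image.2 ⟨q, hq, hc⟩)), hq2,
                      hDn'sub _ hq3 (fun hc => (Finset.mem_sdiff.1 hq3).2
                        (hc ▸ heBA)), hq4⟩
                  obtain ⟨y', hy'mem, hy'ns⟩ := fresh_partner
                    (fun q hq => ⟨(hokn q hq).1, (hokn q hq).2.2.1⟩) hok2
                    (D_card_eq A B ht) heBDn heBim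
                  have hDn'e : lastIdx B (n+1) \ lastIdx A (n+1)
                      = (lastIdx B n \ lastIdx A n).erase eB := by
                    rw [hJB', hJA']; exact sdiff_update_nomem htB (Or.inl heAB)
                  have hy'D : y' ∈ (lastIdx B n \ lastIdx A n).erase eB := by
                    rw [← hDn'e]; exact hy'mem
                  obtain ⟨hy'eB, hy'D'⟩ := Finset.mem_erase.1 hy'D
                  have hy'lt : nextReq σ T y' < nextReq σ T eB :=
                    lt_of_le_of_ne (hmist _ (Finset.mem_sdiff.1 hy'D').1)
                      (fun hc => hy'eB (nextReq_inj (by rw [hc]; exact helive) hc))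
                  refine ⟨insert (eB, y') m, ⟨?_, inj_insert Prod.fst hok2 heBim,
                    inj_insert Prod.snd hok3 hy'ns⟩, ?_⟩
                  · intro q hq
                    rcases Finset.mem_insert.1 hq with rfl | hq
                    · exact ⟨heBDn, helive, hy'mem, hy'lt⟩
                    · exact hokn q hq
                  · have hUsub : UU A B (n+1) (insert (eB, y') m) ⊆ UU A B n m := by
                      intro x hx
                      obtain ⟨⟨hxA', hxB'⟩, hxlive, hxim⟩ := mem_UU.1 hx
                      have hxDn : x ∈ insert eB
                          ((lastIdx A n \ lastIdx B n).erase eA) := by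
                        rw [← hDn]; exact Finset.mem_sdiff.2 ⟨hxA', hxB'⟩
                      rcases Finset.mem_insert.1 hxDn with rfl | hxDn
                      · exact absurd (Finset.mem_image.2 ⟨(x, y'),
                          Finset.mem_insert_self _ _, rfl⟩) hxim
                      · obtain ⟨hxeA, hxD⟩ := Finset.mem_erase.1 hxDn
                        refine mem_UU.2 ⟨Finset.mem_sdiff.1 hxD, hxlive, fun hc => ?_⟩
                        obtain ⟨q, hq, hqx⟩ := Finset.mem_image.1 hc
                        exact hxim (Finset.mem_image.2 ⟨q,
                          Finset.mem_insert_of_mem hq, hqx⟩)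
                    have hcard := Finset.card_le_card hUsub
                    rw [hmA, hmB, hiA, hiB]
                    omega
            · -- eB dead
              refine ⟨m.filter (fun q => q.1 ≠ eA), ⟨?_, inj_filter _ _ hok2,
                inj_filter _ _ hok3⟩, ?_⟩
              · intro q hq
                have hqm := Finset.filter_subset _ _ hq
                have hq1ne := (Finset.mem_filter.1 hq).2
                obtain ⟨hq1, hq2, hq3, hq4⟩ := hok1 q hqm
                exact ⟨hDnsub _ hq1 hq1ne, hq2, hDn'sub _ hq3
                  (fun hc => (Finset.mem_sdiff.1 hq3).2 (hc ▸ heBA)), hq4⟩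
              · have hUsub : UU A B (n+1) (m.filter (fun q => q.1 ≠ eA)) ⊆
                    UU A B n m := by
                  intro x hx
                  obtain ⟨⟨hxA', hxB'⟩, hxlive, hxim⟩ := mem_UU.1 hx
                  have hxDn : x ∈ insert eB ((lastIdx A n \ lastIdx B n).erase eA) := by
                    rw [← hDn]; exact Finset.mem_sdiff.2 ⟨hxA', hxB'⟩
                  rcases Finset.mem_insert.1 hxDn with rfl | hxDn
                  · exact absurd hxlive helive
                  · obtain ⟨hxeA, hxD⟩ := Finset.mem_erase.1 hxDn
                    refine mem_UU.2 ⟨Finset.mem_sdiff.1 hxD, hxlive, fun hc => ?_⟩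
                    obtain ⟨q, hq, hqx⟩ := Finset.mem_image.1 hc
                    exact hxim (Finset.mem_image.2 ⟨q, Finset.mem_filter.2
                      ⟨hq, by rw [hqx]; exact hxeA⟩, hqx⟩)
                have hcard := Finset.card_le_card hUsub
                rw [hmA, hmB, hiA, hiB]
                omega
          · -- eB not in A's cache indices
            have hDn : lastIdx A (n+1) \ lastIdx B (n+1)
                = (lastIdx A n \ lastIdx B n).erase eA := by
              rw [hJA', hJB']; exact sdiff_update_nomem htA (Or.inl heBA)
            by_cases heBmat : eB ∈ m.image Prod.snd
            · obtain ⟨q1, hq1m, hq1eB⟩ := Finset.mem_image.1 heBmat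
              obtain ⟨hq11, hq12, hq13, hq14⟩ := hok1 q1 hq1m
              have hq14' : nextReq σ T eB < nextReq σ T q1.1 := by
                rw [← hq1eB]; exact hq14
              by_cases hx1eA : q1.1 = eA
              · refine ⟨m.filter (fun q => q.1 ≠ eA ∧ q.2 ≠ eB),
                  ⟨?_, inj_filter _ _ hok2, inj_filter _ _ hok3⟩, ?_⟩
                · intro q hq
                  have hqm := Finset.filter_subset _ _ hq
                  obtain ⟨hq1ne, hq2ne⟩ := (Finset.mem_filter.1 hq).2
                  obtain ⟨hq1, hq2, hq3, hq4⟩ := hok1 q hqm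
                  exact ⟨hDnsub _ hq1 hq1ne, hq2, hDn'sub _ hq3 hq2ne, hq4⟩
                · have hUsub : UU A B (n+1) (m.filter (fun q => q.1 ≠ eA ∧ q.2 ≠ eB))
                      ⊆ UU A B n m := by
                    intro x hx
                    obtain ⟨⟨hxA', hxB'⟩, hxlive, hxim⟩ := mem_UU.1 hx
                    have hxDn : x ∈ (lastIdx A n \ lastIdx B n).erase eA := by
                      rw [← hDn]; exact Finset.mem_sdiff.2 ⟨hxA', hxB'⟩
                    obtain ⟨hxeA, hxD⟩ := Finset.mem_erase.1 hxDn
                    refine mem_UU.2 ⟨Finset.mem_sdiff.1 hxD, hxlive, fun hc => ?_⟩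
                    obtain ⟨q, hq, hqx⟩ := Finset.mem_image.1 hc
                    by_cases hq2 : q.2 = eB
                    · have : q = q1 := hok3 q hq q1 hq1m (hq2.trans hq1eB.symm)
                      exact hxeA (by rw [← hqx, this, hx1eA])
                    · exact hxim (Finset.mem_image.2 ⟨q, Finset.mem_filter.2
                        ⟨hq, by rw [hqx]; exact hxeA, hq2⟩, hqx⟩)
                  have hcard := Finset.card_le_card hUsub
                  rw [hmA, hmB, hiA, hiB]
                  omega
              · -- re-match the orphaned first component q1.1
                have hx1Dn : q1.1 ∈ lastIdx A (n+1) \ lastIdx B (n+1) :=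
                  hDnsub _ hq11 hx1eA
                have hx1un'' : q1.1 ∉
                    (m.filter (fun q => q.1 ≠ eA ∧ q.2 ≠ eB)).image Prod.fst := by
                  intro hc
                  obtain ⟨r, hr, hrx⟩ := Finset.mem_image.1 hc
                  have : r = q1 := hok2 r (Finset.filter_subset _ _ hr) q1 hq1m hrx
                  exact (Finset.mem_filter.1 hr).2.2 (this ▸ hq1eB)
                have hokn'' : ∀ q ∈ m.filter (fun q => q.1 ≠ eA ∧ q.2 ≠ eB),
                    q.1 ∈ lastIdx A (n+1) \ lastIdx B (n+1) ∧ nextReq σ T q.1 ≤ T ∧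
                    q.2 ∈ lastIdx B (n+1) \ lastIdx A (n+1) ∧
                    nextReq σ T q.2 < nextReq σ T q.1 := by
                  intro q hq
                  have hqm := Finset.filter_subset _ _ hq
                  obtain ⟨hq1ne, hq2ne⟩ := (Finset.mem_filter.1 hq).2
                  obtain ⟨hq1, hq2, hq3, hq4⟩ := hok1 q hqm
                  exact ⟨hDnsub _ hq1 hq1ne, hq2, hDn'sub _ hq3 hq2ne, hq4⟩
                by_cases heAB : eA ∈ lastIdx B n
                · have heADn' : eA ∈ lastIdx B (n+1) \ lastIdx A (n+1) := by
                    rw [hJA', hJB', Finset.mem_sdiff]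
                    constructor
                    · exact Finset.mem_insert_of_mem
                        (Finset.mem_erase.2 ⟨Ne.symm hne, heAB⟩)
                    · intro hc
                      rcases Finset.mem_insert.1 hc with hc | hc
                      · omega
                      · exact (Finset.mem_erase.1 hc).1 rfl
                  have heAim'' : eA ∉
                      (m.filter (fun q => q.1 ≠ eA ∧ q.2 ≠ eB)).image Prod.snd := by
                    intro hc
                    obtain ⟨r, hr, hre⟩ := Finset.mem_image.1 hc
                    exact (Finset.mem_sdiff.1
                      (hok1 r (Finset.filter_subset _ _ hr)).2.2.1).2 (hre ▸ heA)
                  have hlt : nextReq σ T eA < nextReq σ T q1.1 :=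
                    lt_of_le_of_lt (hmist eA heAB) hq14'
                  refine ⟨insert (q1.1, eA) (m.filter (fun q => q.1 ≠ eA ∧ q.2 ≠ eB)),
                    ⟨?_, inj_insert Prod.fst (inj_filter _ _ hok2) hx1un'',
                     inj_insert Prod.snd (inj_filter _ _ hok3) heAim''⟩, ?_⟩
                  · intro q hq
                    rcases Finset.mem_insert.1 hq with rfl | hq
                    · exact ⟨hx1Dn, hq12, heADn', hlt⟩
                    · exact hokn'' q hq
                  · have hUsub : UU A B (n+1)
                        (insert (q1.1, eA) (m.filter (fun q => q.1 ≠ eA ∧ q.2 ≠ eB)))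
                        ⊆ UU A B n m := by
                      intro x hx
                      obtain ⟨⟨hxA', hxB'⟩, hxlive, hxim⟩ := mem_UU.1 hx
                      have hxDn : x ∈ (lastIdx A n \ lastIdx B n).erase eA := by
                        rw [← hDn]; exact Finset.mem_sdiff.2 ⟨hxA', hxB'⟩
                      obtain ⟨hxeA, hxD⟩ := Finset.mem_erase.1 hxDn
                      refine mem_UU.2 ⟨Finset.mem_sdiff.1 hxD, hxlive, fun hc => ?_⟩
                      obtain ⟨q, hq, hqx⟩ := Finset.mem_image.1 hc
                      by_cases hq2 : q.2 = eB
                      · have : q = q1 := hok3 q hq q1 hq1m (hq2.trans hq1eB.symm)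
                        exact hxim (Finset.mem_image.2 ⟨(q1.1, eA),
                          Finset.mem_insert_self _ _, by rw [← hqx, this]⟩)
                      · exact hxim (Finset.mem_image.2 ⟨q, Finset.mem_insert_of_mem
                          (Finset.mem_filter.2 ⟨hq, by rw [hqx]; exact hxeA, hq2⟩), hqx⟩)
                    have hcard := Finset.card_le_card hUsub
                    rw [hmA, hmB, hiA, hiB]
                    omega
                · obtain ⟨y', hy'mem, hy'ns⟩ := fresh_partner
                    (fun q hq => ⟨(hokn'' q hq).1, (hokn'' q hq).2.2.1⟩)
                    (inj_filter _ _ hok2) (D_card_eq A B ht) hx1Dn hx1un''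
                  have hDn'e : lastIdx B (n+1) \ lastIdx A (n+1)
                      = (lastIdx B n \ lastIdx A n).erase eB := by
                    rw [hJB', hJA']; exact sdiff_update_nomem htB (Or.inl heAB)
                  have hy'D : y' ∈ (lastIdx B n \ lastIdx A n).erase eB := by
                    rw [← hDn'e]; exact hy'mem
                  obtain ⟨hy'eB, hy'D'⟩ := Finset.mem_erase.1 hy'D
                  have hy'lt : nextReq σ T y' < nextReq σ T q1.1 :=
                    lt_of_le_of_lt (hmist _ (Finset.mem_sdiff.1 hy'D').1) hq14'
                  refine ⟨insert (q1.1, y') (m.filter (fun q => q.1 ≠ eA ∧ q.2 ≠ eB)),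
                    ⟨?_, inj_insert Prod.fst (inj_filter _ _ hok2) hx1un'',
                     inj_insert Prod.snd (inj_filter _ _ hok3) hy'ns⟩, ?_⟩
                  · intro q hq
                    rcases Finset.mem_insert.1 hq with rfl | hq
                    · exact ⟨hx1Dn, hq12, hy'mem, hy'lt⟩
                    · exact hokn'' q hq
                  · have hUsub : UU A B (n+1)
                        (insert (q1.1, y') (m.filter (fun q => q.1 ≠ eA ∧ q.2 ≠ eB)))
                        ⊆ UU A B n m := by
                      intro x hx
                      obtain ⟨⟨hxA', hxB'⟩, hxlive, hxim⟩ := mem_UU.1 hx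
                      have hxDn : x ∈ (lastIdx A n \ lastIdx B n).erase eA := by
                        rw [← hDn]; exact Finset.mem_sdiff.2 ⟨hxA', hxB'⟩
                      obtain ⟨hxeA, hxD⟩ := Finset.mem_erase.1 hxDn
                      refine mem_UU.2 ⟨Finset.mem_sdiff.1 hxD, hxlive, fun hc => ?_⟩
                      obtain ⟨q, hq, hqx⟩ := Finset.mem_image.1 hc
                      by_cases hq2 : q.2 = eB
                      · have : q = q1 := hok3 q hq q1 hq1m (hq2.trans hq1eB.symm)
                        exact hxim (Finset.mem_image.2 ⟨(q1.1, y'),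
                          Finset.mem_insert_self _ _, by rw [← hqx, this]⟩)
                      · exact hxim (Finset.mem_image.2 ⟨q, Finset.mem_insert_of_mem
                          (Finset.mem_filter.2 ⟨hq, by rw [hqx]; exact hxeA, hq2⟩), hqx⟩)
                    have hcard := Finset.card_le_card hUsub
                    rw [hmA, hmB, hiA, hiB]
                    omega
            · -- eB not matched as a second component
              refine ⟨m.filter (fun q => q.1 ≠ eA), ⟨?_, inj_filter _ _ hok2,
                inj_filter _ _ hok3⟩, ?_⟩
              · intro q hq
                have hqm := Finset.filter_subset _ _ hq
                have hq1ne := (Finset.mem_filter.1 hq).2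
                obtain ⟨hq1, hq2, hq3, hq4⟩ := hok1 q hqm
                refine ⟨hDnsub _ hq1 hq1ne, hq2, hDn'sub _ hq3
                  (fun hc => heBmat (Finset.mem_image.2 ⟨q, hqm, hc⟩)), hq4⟩
              · have hUsub : UU A B (n+1) (m.filter (fun q => q.1 ≠ eA)) ⊆
                    UU A B n m := by
                  intro x hx
                  obtain ⟨⟨hxA', hxB'⟩, hxlive, hxim⟩ := mem_UU.1 hx
                  have hxDn : x ∈ (lastIdx A n \ lastIdx B n).erase eA := by
                    rw [← hDn]; exact Finset.mem_sdiff.2 ⟨hxA', hxB'⟩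
                  obtain ⟨hxeA, hxD⟩ := Finset.mem_erase.1 hxDn
                  refine mem_UU.2 ⟨Finset.mem_sdiff.1 hxD, hxlive, fun hc => ?_⟩
                  obtain ⟨q, hq, hqx⟩ := Finset.mem_image.1 hc
                  exact hxim (Finset.mem_image.2 ⟨q, Finset.mem_filter.2
                    ⟨hq, by rw [hqx]; exact hxeA⟩, hqx⟩)
                have hcard := Finset.card_le_card hUsub
                rw [hmA, hmB, hiA, hiB]
                omega

end Main
section Part2
variable {S : Type} [DecidableEq S] {k T : ℕ} {σ : ℕ → S}

/-- Once a page is evicted at time `t`, its last-request index before `t` can no longer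
be a last-request index of a cached page at a later time before the page is requested
again. -/
lemma no_reenter {B : CacheRun S k T σ} {x t t' : ℕ} (ht1 : 1 ≤ t) (htt : t < t')
    (ht' : t' ≤ T) (hm : σ t ∉ B.C (t-1)) (hc : (B.C (t-1)).card = k)
    (hx : x ∈ lastIdx B (t-1)) (hpx : B.p t = σ x) (hx' : x ∈ lastIdx B (t'-1)) :
    False := by
  have hxb := mem_lastIdx.1 hx
  have hx'b := mem_lastIdx.1 hx'
  have hstep0 : σ x ∉ B.C t := by
    rw [B.evict t ht1 (by omega) hm hc]
    intro hmem
    rcases Finset.mem_insert.1 hmem with hh | hh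
    · exact hm (hh ▸ hxb.2.1)
    · exact (Finset.mem_erase.1 hh).1 hpx.symm
  have key : ∀ s, t ≤ s → s ≤ t' - 1 → σ x ∉ B.C s := by
    intro s
    induction s with
    | zero => intro h _; exact absurd ht1 (by omega)
    | succ n ihn =>
      intro hts hst'
      rcases Nat.eq_or_lt_of_le hts with he | hlt
      · rw [← he]; exact hstep0
      · have hn : σ x ∉ B.C n := ihn (by omega) (by omega)
        intro hmem
        have hsub := C_subset_step (R := B) (t := n+1) (by omega) (by omega)
        rcases Finset.mem_insert.1 (hsub hmem) with hh | hh
        · exact hx'b.2.2 (n+1) (Finset.mem_Icc.2 ⟨by omega, by omega⟩) hh.symm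
        · exact hn (by simpa using hh)
  exact key (t'-1) (by omega) le_rfl hx'b.2.1

theorem mistakes_le_loss (B : CacheRun S k T σ) (ω : ℕ → ℕ) (hB : IsBlindOracle B ω) :
    mistCnt B T ≤ totalLoss σ T ω := by
  classical
  set M : Finset ℕ := (Finset.Icc 1 T).filter (MistakeAt B) with hM
  have hdata : ∀ t, ∃ e z : ℕ, t ∈ M →
      e ∈ lastIdx B (t-1) ∧ σ e = B.p t ∧ z ∈ lastIdx B (t-1) ∧
      nextReq σ T e < nextReq σ T z ∧ ω z ≤ ω e := by
    intro t
    by_cases ht : t ∈ M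
    · obtain ⟨htI, hMT⟩ := Finset.mem_filter.1 ht
      rw [Finset.mem_Icc] at htI
      obtain ⟨hm, hc, e, he, hσe, z, hz, hνlt⟩ := hMT
      have hES : EvictStep B t := ⟨htI.1, htI.2, hm, hc⟩
      exact ⟨e, z, fun _ => ⟨he, hσe, hz, hνlt, hB t hES e he hσe.symm z hz⟩⟩
    · exact ⟨0, 0, fun h => absurd h ht⟩
  choose jf zf hspec using hdata
  -- basic facts for mistakes
  have htM : ∀ t ∈ M, 1 ≤ t ∧ t ≤ T := by
    intro t ht
    have := (Finset.mem_filter.1 ht).1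
    rw [Finset.mem_Icc] at this
    exact this
  have hjIcc : ∀ t ∈ M, jf t ∈ Finset.Icc 1 T := by
    intro t ht
    have hb := (mem_lastIdx.1 (hspec t ht).1).1
    have := (htM t ht).2
    rw [Finset.mem_Icc]
    omega
  have hzIcc : ∀ t ∈ M, zf t ∈ Finset.Icc 1 T := by
    intro t ht
    have hb := (mem_lastIdx.1 (hspec t ht).2.2.1).1
    have := (htM t ht).2
    rw [Finset.mem_Icc]
    omega
  have hjlive : ∀ t ∈ M, nextReq σ T (jf t) ≤ T := by
    intro t ht
    have h1 := (hspec t ht).2.2.2.1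
    have h2 := nextReq_le (σ := σ) (T := T) (zf t)
    omega
  have hjinj : ∀ t ∈ M, ∀ t' ∈ M, jf t = jf t' → t = t' := by
    intro t ht t' ht' hj
    have hs := hspec t ht
    have hs' := hspec t' ht'
    have hmt := (Finset.mem_filter.1 ht).2
    have hmt' := (Finset.mem_filter.1 ht').2
    rcases lt_trichotomy t t' with hlt | he | hlt
    · exfalso
      have hcontra : jf t ∈ lastIdx B (t' - 1) := by rw [hj]; exact hs'.1
      exact no_reenter (htM t ht).1 hlt (htM t' ht').2 hmt.1 hmt.2.1 hs.1 hs.2.1.symm hcontra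
    · exact he
    · exfalso
      have hcontra : jf t' ∈ lastIdx B (t - 1) := by rw [← hj]; exact hs.1
      exact no_reenter (htM t' ht').1 hlt (htM t ht).2 hmt'.1 hmt'.2.1 hs'.1 hs'.2.1.symm
        hcontra
  -- split according to over/under prediction of the evicted index
  have hsplit := Finset.card_filter_add_card_filter_not
    (s := M) (p := fun t => ω (jf t) - nextReq σ T (jf t) = 0)
  -- overpredicted part
  have h1 : (M.filter (fun t => ¬(ω (jf t) - nextReq σ T (jf t) = 0))).card ≤
      ∑ x ∈ Finset.Icc 1 T, (ω x - nextReq σ T x) := by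
    have hmaps : ∀ t ∈ M.filter (fun t => ¬(ω (jf t) - nextReq σ T (jf t) = 0)),
        jf t ∈ (Finset.Icc 1 T).filter (fun x => 1 ≤ ω x - nextReq σ T x) := by
      intro t ht
      have htm := Finset.filter_subset _ _ ht
      have hne := (Finset.mem_filter.1 ht).2
      exact Finset.mem_filter.2 ⟨hjIcc t htm, by omega⟩
    have hinj : ∀ t ∈ M.filter (fun t => ¬(ω (jf t) - nextReq σ T (jf t) = 0)),
        ∀ t' ∈ M.filter (fun t => ¬(ω (jf t) - nextReq σ T (jf t) = 0)),
        jf t = jf t' → t = t' := fun t ht t' ht' h =>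
      hjinj t (Finset.filter_subset _ _ ht) t' (Finset.filter_subset _ _ ht') h
    calc (M.filter (fun t => ¬(ω (jf t) - nextReq σ T (jf t) = 0))).card
        ≤ ((Finset.Icc 1 T).filter (fun x => 1 ≤ ω x - nextReq σ T x)).card :=
          Finset.card_le_card_of_injOn jf hmaps hinj
      _ ≤ ∑ x ∈ (Finset.Icc 1 T).filter (fun x => 1 ≤ ω x - nextReq σ T x),
            (ω x - nextReq σ T x) := by
          have := Finset.card_nsmul_le_sum
            ((Finset.Icc 1 T).filter (fun x => 1 ≤ ω x - nextReq σ T x))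
            (fun x => ω x - nextReq σ T x) 1 (fun x hx => (Finset.mem_filter.1 hx).2)
          simpa using this
      _ ≤ ∑ x ∈ Finset.Icc 1 T, (ω x - nextReq σ T x) :=
          Finset.sum_le_sum_of_subset_of_nonneg (Finset.filter_subset _ _)
            (fun _ _ _ => Nat.zero_le _)
  -- underpredicted part, fiberwise over the witness z
  have h2 : (M.filter (fun t => ω (jf t) - nextReq σ T (jf t) = 0)).card ≤
      ∑ x ∈ Finset.Icc 1 T, (nextReq σ T x - ω x) := by
    set M2 := M.filter (fun t => ω (jf t) - nextReq σ T (jf t) = 0) with hM2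
    have hfib : M2.card = ∑ y ∈ M2.image zf, (M2.filter (fun t => zf t = y)).card :=
      Finset.card_eq_sum_card_fiberwise (fun x hx => Finset.mem_image_of_mem _ hx)
    have hfibbound : ∀ y ∈ M2.image zf,
        (M2.filter (fun t => zf t = y)).card ≤ nextReq σ T y - ω y := by
      intro y hy
      have hmaps : ∀ t ∈ M2.filter (fun t => zf t = y),
          nextReq σ T (jf t) ∈ Finset.Ico (nextReq σ T y - (nextReq σ T y - ω y))
            (nextReq σ T y) := by
        intro t ht
        have htM2 := Finset.filter_subset _ _ ht
        have htm := Finset.filter_subset _ _ htM2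
        have hty := (Finset.mem_filter.1 ht).2
        have hb0 := (Finset.mem_filter.1 htM2).2
        have hs := hspec t htm
        have hνlt : nextReq σ T (jf t) < nextReq σ T y := by
          rw [← hty]; exact hs.2.2.2.1
        have hω : ω (zf t) ≤ ω (jf t) := hs.2.2.2.2
        rw [hty] at hω
        rw [Finset.mem_Ico]
        constructor
        · omega
        · exact hνlt
      have hinj : ∀ t ∈ M2.filter (fun t => zf t = y),
          ∀ t' ∈ M2.filter (fun t => zf t = y),
          nextReq σ T (jf t) = nextReq σ T (jf t') → t = t' := by
        intro t ht t' ht' h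
        have htm := Finset.filter_subset _ _ (Finset.filter_subset _ _ ht)
        have htm' := Finset.filter_subset _ _ (Finset.filter_subset _ _ ht')
        exact hjinj t htm t' htm' (nextReq_inj (hjlive t htm) h)
      calc (M2.filter (fun t => zf t = y)).card
          ≤ (Finset.Ico (nextReq σ T y - (nextReq σ T y - ω y)) (nextReq σ T y)).card :=
            Finset.card_le_card_of_injOn _ hmaps hinj
        _ ≤ nextReq σ T y - ω y := by rw [Nat.card_Ico]; omega
    calc M2.card = ∑ y ∈ M2.image zf, (M2.filter (fun t => zf t = y)).card := hfib
      _ ≤ ∑ y ∈ M2.image zf, (nextReq σ T y - ω y) := Finset.sum_le_sum hfibbound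
      _ ≤ ∑ x ∈ Finset.Icc 1 T, (nextReq σ T x - ω x) := by
          apply Finset.sum_le_sum_of_subset_of_nonneg
          · intro y hy
            obtain ⟨t, ht, rfl⟩ := Finset.mem_image.1 hy
            exact hzIcc t (Finset.filter_subset _ _ ht)
          · exact fun _ _ _ => Nat.zero_le _
  have htotal : totalLoss σ T ω = ∑ x ∈ Finset.Icc 1 T, (nextReq σ T x - ω x) +
      ∑ x ∈ Finset.Icc 1 T, (ω x - nextReq σ T x) := by
    rw [← Finset.sum_add_distrib]
    rfl
  have : mistCnt B T = M.card := rfl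
  omega

end Part2
/-- For BlindOracle, `OBJ_B ≤ OPT + η`; in particular its competitive
ratio is at most `1 + η/OPT`. -/
theorem stmt4 {S : Type} [DecidableEq S] (k T : ℕ) (hk : 1 ≤ k) (σ : ℕ → S) (ω : ℕ → ℕ)
    (B A : CacheRun S k T σ) (hB : IsBlindOracle B ω) (hA : IsBelady A) :
    misses B ≤ misses A + totalLoss σ T ω ∧
    (0 < misses A →
      (misses B : ℝ) / misses A ≤ 1 + (totalLoss σ T ω : ℝ) / misses A) := by
  have hmain : misses B ≤ misses A + totalLoss σ T ω := by
    obtain ⟨m, _, hineq⟩ := invariant_main A B T le_rfl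
    have h2 := mistakes_le_loss B ω hB
    have hBB : misses B = missCnt B T := rfl
    have hAA : misses A = missCnt A T := rfl
    omega
  refine ⟨hmain, fun hpos => ?_⟩
  have hpos' : (0:ℝ) < (misses A : ℝ) := by exact_mod_cast hpos
  have hle : (misses B : ℝ) ≤ (misses A : ℝ) + (totalLoss σ T ω : ℝ) := by
    exact_mod_cast hmain
  calc (misses B : ℝ) / misses A ≤ ((misses A : ℝ) + totalLoss σ T ω) / misses A := by
        gcongr
    _ = 1 + (totalLoss σ T ω : ℝ) / misses A := by
        rw [add_div, div_self (ne_of_gt hpos')]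

end Caching
end
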